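/- arXiv:0810.3838 — 5 statements merged into one kernel-verified Lean document; each statement's English description precedes it below -/
import Mathlib

section
/- Let t ≥ 1, let a'_1, ..., a'_t be positive integers and b'_1 ≥ b'_2 ≥ ... ≥ b'_t ≥ 1 integers. Let b_1 ≥ b_2 ≥ ... ≥ b_T ≥ 0 be integers with T ≥ (∑_{i=1}^t a'_i) and suppose: (1) for every j ∈ [1,t], ∑_{k ≤ A_j} b_k ≥ ∑_{i ≤ j} a'_i b'_i, where A_j = ∑_{i ≤ j} a'_i; and (2) ∑_{k=1}^T b_k = ∑_{i=1}^t a'_i b'_i + (T - A_t) (i.e. the total of the b_k equals the total of the partition μ obtained by taking each b'_i with multiplicity a'_i together with T - A_t parts equal to 1). Then for every ℓ ∈ [1, T], the sum ∑_{k ≤ ℓ} b_k is greater than or equal to the sum of the ℓ largest parts of μ. In other words, the partition (b_1, ..., b_T) dominates μ. -/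
open Finset

/-- Interpolation: if the checkpoint bounds hold at `p` and `q` and the target is
affine with slope `v` on `[p,q]`, then it holds at any `ℓ ∈ [p,q]`. -/
lemma interp_aux (B : ℕ → ℕ) (hB : ∀ k l : ℕ, k ≤ l → B l ≤ B k)
    (p q ℓ S v : ℕ) (hpℓ : p ≤ ℓ) (hℓq : ℓ ≤ q)
    (hp : S ≤ ∑ k ∈ range p, B k)
    (hq : S + (q - p) * v ≤ ∑ k ∈ range q, B k) :
    S + (ℓ - p) * v ≤ ∑ k ∈ range ℓ, B k := by
  rcases Nat.eq_or_lt_of_le hpℓ with rfl | hlt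
  · simpa using hp
  by_cases hcase : v ≤ B (ℓ - 1)
  · have hsplit : (∑ k ∈ Ico 0 p, B k) + ∑ k ∈ Ico p ℓ, B k = ∑ k ∈ Ico 0 ℓ, B k :=
      Finset.sum_Ico_consecutive _ (Nat.zero_le _) hpℓ
    have hlow : (ℓ - p) * v ≤ ∑ k ∈ Ico p ℓ, B k := by
      calc (ℓ - p) * v = ∑ _k ∈ Ico p ℓ, v := by
            rw [Finset.sum_const, Nat.card_Ico, smul_eq_mul]
        _ ≤ ∑ k ∈ Ico p ℓ, B k := by
            apply Finset.sum_le_sum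
            intro k hk
            rw [Finset.mem_Ico] at hk
            exact le_trans hcase (hB k (ℓ - 1) (by omega))
    rw [range_eq_Ico, ← hsplit]
    have := hp
    rw [range_eq_Ico] at this
    omega
  · push_neg at hcase
    have hsplit : (∑ k ∈ Ico 0 ℓ, B k) + ∑ k ∈ Ico ℓ q, B k = ∑ k ∈ Ico 0 q, B k :=
      Finset.sum_Ico_consecutive _ (Nat.zero_le _) hℓq
    have hhigh : ∑ k ∈ Ico ℓ q, B k ≤ (q - ℓ) * v := by
      calc ∑ k ∈ Ico ℓ q, B k ≤ ∑ _k ∈ Ico ℓ q, v := by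
            apply Finset.sum_le_sum
            intro k hk
            rw [Finset.mem_Ico] at hk
            exact le_trans (hB (ℓ - 1) k (by omega)) (by omega)
        _ = (q - ℓ) * v := by rw [Finset.sum_const, Nat.card_Ico, smul_eq_mul]
    have hq' := hq
    rw [range_eq_Ico] at hq' ⊢
    have hqp : (q - p) * v = (ℓ - p) * v + (q - ℓ) * v := by
      rw [← Nat.add_mul]; congr 1; omega
    omega

/-- Moving one unit from position `j` to position `i` in `m`. -/
lemma move2_sum {t : ℕ} (m w : Fin t → ℕ) (i j : Fin t) (hij : i ≠ j) (hj : 0 < m j) :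
    (∑ k, (if k = i then m i + 1 else if k = j then m j - 1 else m k) * w k) + w j
      = (∑ k, m k * w k) + w i := by
  classical
  have hsub : ({i, j} : Finset (Fin t)) ⊆ univ := subset_univ _
  rw [← Finset.sum_sdiff hsub, ← Finset.sum_sdiff (f := fun k => m k * w k) hsub]
  rw [Finset.sum_pair hij, Finset.sum_pair hij]
  have hdiff : ∀ k ∈ univ \ ({i, j} : Finset (Fin t)),
      (if k = i then m i + 1 else if k = j then m j - 1 else m k) * w k = m k * w k := by
    intro k hk
    simp only [Finset.mem_sdiff, Finset.mem_insert, Finset.mem_singleton, not_or] at hk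
    rw [if_neg hk.2.1, if_neg hk.2.2]
  rw [Finset.sum_congr rfl hdiff]
  have hi : (if i = i then m i + 1 else if i = j then m j - 1 else m i) = m i + 1 := by
    simp
  have hjv : (if j = i then m i + 1 else if j = j then m j - 1 else m j) = m j - 1 := by
    simp [hij.symm]
  rw [hi, hjv]
  obtain ⟨c, hc⟩ : ∃ c, m j = c + 1 := ⟨m j - 1, by omega⟩
  rw [hc]
  simp only [Nat.add_sub_cancel]
  ring

/-- Adding one unit at position `i` in `m`. -/
lemma move1_sum {t : ℕ} (m w : Fin t → ℕ) (i : Fin t) :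
    (∑ k, (if k = i then m i + 1 else m k) * w k) = (∑ k, m k * w k) + w i := by
  classical
  have : ∀ k ∈ (univ : Finset (Fin t)),
      (if k = i then m i + 1 else m k) * w k = m k * w k + (if k = i then w k else 0) := by
    intro k _
    by_cases h : k = i
    · subst h; simp; ring
    · simp [h]
  rw [Finset.sum_congr rfl this, Finset.sum_add_distrib, Finset.sum_ite_eq' univ i w]
  simp

/-- Decomposition of a sub-multiset of a finite sum of multisets. -/
lemma decomp_sum {ι : Type*} [DecidableEq ι] (F : Finset ι) (f : ι → Multiset ℕ) :
    ∀ s : Multiset ℕ, s ≤ ∑ i ∈ F, f i →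
      ∃ g : ι → Multiset ℕ, (∀ i, g i ≤ f i) ∧ s = ∑ i ∈ F, g i := by
  classical
  induction F using Finset.cons_induction with
  | empty =>
    intro s hs
    rw [Finset.sum_empty] at hs
    exact ⟨fun _ => 0, fun _ => zero_le, by simpa using Multiset.le_zero.mp hs⟩
  | cons a F ha ih =>
    intro s hs
    rw [Finset.sum_cons] at hs
    have h2 : s - f a ≤ ∑ i ∈ F, f i :=
      Multiset.sub_le_iff_le_add.mpr (by rwa [add_comm] at hs)
    obtain ⟨g, hg, hsum⟩ := ih _ h2
    refine ⟨Function.update g a (s ∩ f a), ?_, ?_⟩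
    · intro i
      by_cases h : i = a
      · subst h; rw [Function.update_self]; exact Multiset.inter_le_right
      · rw [Function.update_of_ne h]; exact hg i
    · rw [Finset.sum_cons, Function.update_self]
      have : ∑ i ∈ F, Function.update g a (s ∩ f a) i = ∑ i ∈ F, g i :=
        Finset.sum_congr rfl fun i hi =>
          Function.update_of_ne (by rintro rfl; exact ha hi) _ _
      rw [this, ← hsum, add_comm, Multiset.sub_add_inter]

/-- The core arithmetic bound. -/
lemma core_bound (t T : ℕ) (a' b' : Fin t → ℕ)
    (ha' : ∀ i, 1 ≤ a' i) (hb'1 : ∀ i, 1 ≤ b' i)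
    (hb'dec : ∀ i j : Fin t, i ≤ j → b' j ≤ b' i)
    (B : ℕ → ℕ) (hB : ∀ k l : ℕ, k ≤ l → B l ≤ B k)
    (hT : (∑ i, a' i) ≤ T)
    (hcheckN : ∀ j : ℕ,
      (∑ i ∈ univ.filter (fun i : Fin t => (i : ℕ) < j), a' i * b' i)
        ≤ ∑ k ∈ range (∑ i ∈ univ.filter (fun i : Fin t => (i : ℕ) < j), a' i), B k)
    (htotalN : ∑ k ∈ range T, B k = (∑ i, a' i * b' i) + (T - ∑ i, a' i)) :
    ∀ (m : Fin t → ℕ) (n : ℕ), (∀ i, m i ≤ a' i) → n ≤ T - ∑ i, a' i →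
      (∑ i, m i * b' i) + n ≤ ∑ k ∈ range ((∑ i, m i) + n), B k := by
  classical
  have key : ∀ W : ℕ, ∀ (m : Fin t → ℕ) (n : ℕ), n * t + (∑ i, m i * (i : ℕ)) = W →
      (∀ i, m i ≤ a' i) → n ≤ T - ∑ i, a' i →
      (∑ i, m i * b' i) + n ≤ ∑ k ∈ range ((∑ i, m i) + n), B k := by
    intro W
    induction W using Nat.strong_induction_on with
    | _ W ih =>
      intro m n hW hm hn
      by_cases hA : ∃ i j : Fin t, i < j ∧ 0 < m j ∧ m i ≠ a' i
      · -- move one unit from block j to block i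
        obtain ⟨i, j, hij, hmj, hmi⟩ := hA
        have hijne : i ≠ j := ne_of_lt hij
        set m' : Fin t → ℕ := fun k => if k = i then m i + 1 else if k = j then m j - 1 else m k
          with hm'def
        have e1 : (∑ k, m' k * b' k) + b' j = (∑ k, m k * b' k) + b' i :=
          move2_sum m b' i j hijne hmj
        have e2 : (∑ k, m' k) + 1 = (∑ k, m k) + 1 := by
          have := move2_sum m (fun _ => 1) i j hijne hmj
          simpa [hm'def] using this
        have e3 : (∑ k, m' k * (k : ℕ)) + (j : ℕ) = (∑ k, m k * (k : ℕ)) + (i : ℕ) :=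
          move2_sum m (fun k => (k : ℕ)) i j hijne hmj
        have hij' : (i : ℕ) < (j : ℕ) := hij
        have hmeas : n * t + (∑ k, m' k * (k : ℕ)) < W := by
          omega
        have hm' : ∀ k, m' k ≤ a' k := by
          intro k
          by_cases h1 : k = i
          · subst h1
            have he : m' k = m k + 1 := by simp [hm'def]
            have h3 := hm k
            omega
          · by_cases h2 : k = j
            · subst h2
              have he : m' k = m k - 1 := by simp [hm'def, h1]
              have h3 := hm k
              omega
            · have he : m' k = m k := by simp [hm'def, h1, h2]
              have h3 := hm k
              omega
        have hrec := ih _ hmeas m' n rfl hm' hn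
        have hbij : b' j ≤ b' i := hb'dec i j (le_of_lt hij)
        have hcard : (∑ k, m' k) = ∑ k, m k := by omega
        rw [hcard] at hrec
        omega
      · -- no such pair; check whether the `1`-part can be improved
        by_cases hGood : 0 < n → ∀ i, m i = a' i
        · -- good configuration : direct proof
          push_neg at hA
          rcases Nat.eq_zero_or_pos n with hn0 | hnpos
          · subst hn0
            by_cases hm0 : ∀ i, m i = 0
            · simp [hm0]
            · push_neg at hm0
              have hne : (univ.filter (fun j : Fin t => 0 < m j)).Nonempty := by
                obtain ⟨i, hi⟩ := hm0
                exact ⟨i, by simp [Nat.pos_of_ne_zero hi]⟩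
              set j₀ := (univ.filter (fun j : Fin t => 0 < m j)).max' hne with hj₀def
              have hj₀mem := Finset.max'_mem _ hne
              have hj₀pos : 0 < m j₀ := by
                rw [Finset.mem_filter] at hj₀mem; exact hj₀mem.2
              have hle : ∀ j, 0 < m j → j ≤ j₀ := fun j hj =>
                Finset.le_max' _ _ (by simp [hj])
              have hlt : ∀ i : Fin t, i < j₀ → m i = a' i := fun i hi =>
                hA i j₀ hi hj₀pos
              have hgt : ∀ j : Fin t, j₀ < j → m j = 0 := by
                intro j hj
                by_contra h
                exact absurd (hle j (Nat.pos_of_ne_zero h)) (not_le.mpr hj)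
              have hins : univ.filter (fun i : Fin t => (i : ℕ) < (j₀ : ℕ) + 1)
                  = insert j₀ (univ.filter (fun i : Fin t => (i : ℕ) < (j₀ : ℕ))) := by
                ext k
                simp only [Finset.mem_filter, Finset.mem_univ, true_and, Finset.mem_insert]
                constructor
                · intro h
                  rcases Nat.lt_succ_iff_lt_or_eq.mp h with h | h
                  · exact Or.inr h
                  · exact Or.inl (Fin.ext h)
                · rintro (rfl | h)
                  · omega
                  · omega
              have hnotmem : j₀ ∉ univ.filter (fun i : Fin t => (i : ℕ) < (j₀ : ℕ)) := by
                simp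
              have hsum_eq : ∀ w : Fin t → ℕ,
                  ∑ k, m k * w k
                    = (∑ k ∈ univ.filter (fun i : Fin t => (i : ℕ) < (j₀ : ℕ)), a' k * w k)
                        + m j₀ * w j₀ := by
                intro w
                have h1 : ∑ k, m k * w k
                    = ∑ k ∈ univ.filter (fun i : Fin t => (i : ℕ) < (j₀ : ℕ) + 1), m k * w k := by
                  symm
                  apply Finset.sum_subset (Finset.filter_subset _ _)
                  intro x _ hx
                  simp only [Finset.mem_filter, Finset.mem_univ, true_and, not_lt] at hx
                  have hx' : j₀ < x := by
                    rw [Fin.lt_def]; omega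
                  rw [hgt x hx', zero_mul]
                rw [h1, hins, Finset.sum_insert hnotmem]
                have h2 : (∑ k ∈ univ.filter (fun i : Fin t => (i : ℕ) < (j₀ : ℕ)), m k * w k)
                    = ∑ k ∈ univ.filter (fun i : Fin t => (i : ℕ) < (j₀ : ℕ)), a' k * w k := by
                  apply Finset.sum_congr rfl
                  intro k hk
                  rw [Finset.mem_filter] at hk
                  rw [hlt k (by rw [Fin.lt_def]; exact hk.2)]
                rw [h2]
                ring
              set p := ∑ k ∈ univ.filter (fun i : Fin t => (i : ℕ) < (j₀ : ℕ)), a' k with hp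
              set S₀ := ∑ k ∈ univ.filter (fun i : Fin t => (i : ℕ) < (j₀ : ℕ)), a' k * b' k
                with hS₀
              have h1 := hcheckN (j₀ : ℕ)
              have h2 := hcheckN ((j₀ : ℕ) + 1)
              rw [hins, Finset.sum_insert hnotmem, Finset.sum_insert hnotmem] at h2
              have hq : S₀ + ((p + a' j₀) - p) * b' j₀ ≤ ∑ k ∈ range (p + a' j₀), B k := by
                have h3 : (p + a' j₀) - p = a' j₀ := by omega
                rw [h3]
                calc S₀ + a' j₀ * b' j₀ = a' j₀ * b' j₀ + S₀ := by ring
                  _ ≤ ∑ k ∈ range (a' j₀ + p), B k := h2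
                  _ = ∑ k ∈ range (p + a' j₀), B k := by rw [add_comm]
              have hmain := interp_aux B hB p (p + a' j₀) (p + m j₀) S₀ (b' j₀)
                (Nat.le_add_right _ _) (by have := hm j₀; omega) h1 hq
              have hc : (∑ i, m i) = p + m j₀ := by
                have := hsum_eq (fun _ => 1)
                simpa [hp] using this
              have hv : (∑ i, m i * b' i) = S₀ + m j₀ * b' j₀ := hsum_eq b'
              rw [add_zero, add_zero, hc, hv]
              have h4 : (p + m j₀) - p = m j₀ := by omega
              rw [h4] at hmain
              exact hmain
          · -- n > 0 : all m i = a' i, use total sum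
            have hall := hGood hnpos
            have hs1 : (∑ i, m i) = ∑ i, a' i :=
              Finset.sum_congr rfl fun i _ => hall i
            have hs2 : (∑ i, m i * b' i) = ∑ i, a' i * b' i :=
              Finset.sum_congr rfl fun i _ => by rw [hall i]
            have huniv : univ.filter (fun i : Fin t => (i : ℕ) < t) = univ :=
              Finset.filter_true_of_mem fun i _ => i.isLt
            have hp := hcheckN t
            rw [huniv] at hp
            set A := ∑ i, a' i with hA'
            set S := ∑ i, a' i * b' i with hS'
            have hq : S + (T - A) * 1 ≤ ∑ k ∈ range T, B k := by
              rw [htotalN, mul_one]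
            have hmain := interp_aux B hB A T (A + n) S 1
              (Nat.le_add_right _ _) (by omega) hp hq
            rw [hs1, hs2]
            have h4 : (A + n) - A = n := by omega
            rw [h4, mul_one] at hmain
            exact hmain
        · -- move one unit from the `1`-part into block i
          push_neg at hGood
          obtain ⟨hnpos, i, hmi⟩ := hGood
          set m' : Fin t → ℕ := fun k => if k = i then m i + 1 else m k with hm'def
          have e1 : (∑ k, m' k * b' k) = (∑ k, m k * b' k) + b' i := move1_sum m b' i
          have e2 : (∑ k, m' k) = (∑ k, m k) + 1 := by
            have := move1_sum m (fun _ => 1) i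
            simpa [hm'def] using this
          have e3 : (∑ k, m' k * (k : ℕ)) = (∑ k, m k * (k : ℕ)) + (i : ℕ) :=
            move1_sum m (fun k => (k : ℕ)) i
          obtain ⟨n', rfl⟩ : ∃ n'', n = n'' + 1 := ⟨n - 1, by omega⟩
          have hit : (i : ℕ) < t := i.isLt
          have hmeas : n' * t + (∑ k, m' k * (k : ℕ)) < W := by
            have hmul : (n' + 1) * t = n' * t + t := by ring
            omega
          have hm' : ∀ k, m' k ≤ a' k := by
            intro k
            by_cases h1 : k = i
            · subst h1
              have he : m' k = m k + 1 := by simp [hm'def]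
              have h3 := hm k
              omega
            · have he : m' k = m k := by simp [hm'def, h1]
              have h3 := hm k
              omega
          have hn' : n' ≤ T - ∑ i, a' i := by omega
          have hrec := ih _ hmeas m' n' rfl hm' hn'
          rw [e2] at hrec
          have hcardeq : (∑ k, m k) + 1 + n' = (∑ k, m k) + (n' + 1) := by omega
          rw [hcardeq] at hrec
          have hb1 := hb'1 i
          omega
  intro m n hm hn
  exact key _ m n rfl hm hn

/-- Conversion between `Fin T` filtered sums and `range` sums. -/
lemma convB {T : ℕ} (b : Fin T → ℕ) (N : ℕ) (hN : N ≤ T) :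
    ∑ k ∈ univ.filter (fun k : Fin T => (k : ℕ) < N), b k
      = ∑ k ∈ range N, (fun k : ℕ => if h : k < T then b ⟨k, h⟩ else 0) k := by
  rw [Finset.sum_filter]
  have hcong : ∀ k : Fin T, (if (k : ℕ) < N then b k else 0)
      = (fun x : ℕ => if x < N then (if h : x < T then b ⟨x, h⟩ else 0) else 0) (k : ℕ) := by
    intro k
    simp [k.isLt]
  rw [Finset.sum_congr rfl (fun k _ => hcong k),
    Fin.sum_univ_eq_sum_range (fun x : ℕ => if x < N then (if h : x < T then b ⟨x, h⟩ else 0) else 0) T]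
  have hfe : (range T).filter (fun x => x < N) = range N := by
    ext x; simp; omega
  rw [← hfe, Finset.sum_filter]

/-- Dominance from checkpoint inequalities: if the weakly decreasing sequence
`b_1 ≥ ... ≥ b_T ≥ 0` satisfies the partial-sum inequality at each checkpoint
`A_j = ∑_{i ≤ j} a'_i` against `∑_{i ≤ j} a'_i b'_i`, and the total sums agree
with the partition `μ` consisting of each `b'_i` with multiplicity `a'_i` together
with `T - A_t` parts equal to `1`, then `(b_1, ..., b_T)` dominates `μ`. -/
theorem stmt_3 (t T : ℕ) (ht : 1 ≤ t) (a' b' : Fin t → ℕ)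
    (ha' : ∀ i, 1 ≤ a' i) (hb'1 : ∀ i, 1 ≤ b' i)
    (hb'dec : ∀ i j : Fin t, i ≤ j → b' j ≤ b' i)
    (b : Fin T → ℕ) (hbdec : ∀ k l : Fin T, k ≤ l → b l ≤ b k)
    (hT : (∑ i, a' i) ≤ T)
    (hcheck : ∀ j : Fin t,
      (∑ i ∈ Finset.univ.filter (fun i : Fin t => i ≤ j), a' i * b' i)
        ≤ ∑ k ∈ Finset.univ.filter
            (fun k : Fin T => (k : ℕ) < ∑ i ∈ Finset.univ.filter (fun i : Fin t => i ≤ j), a' i),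
            b k)
    (htotal : (∑ k, b k) = (∑ i, a' i * b' i) + (T - ∑ i, a' i)) :
    ∀ ℓ : ℕ, 1 ≤ ℓ → ℓ ≤ T →
      let μ : Multiset ℕ :=
        (∑ i, Multiset.replicate (a' i) (b' i)) + Multiset.replicate (T - ∑ i, a' i) 1
      ((μ.sort (· ≤ ·)).reverse.take ℓ).sum
        ≤ ∑ k ∈ Finset.univ.filter (fun k : Fin T => (k : ℕ) < ℓ), b k := by
  classical
  intro ℓ hℓ1 hℓT μ
  set B : ℕ → ℕ := fun k => if h : k < T then b ⟨k, h⟩ else 0 with hBdef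
  have hB : ∀ k l : ℕ, k ≤ l → B l ≤ B k := by
    intro k l hkl
    simp only [hBdef]
    by_cases hl : l < T
    · have hk : k < T := lt_of_le_of_lt hkl hl
      rw [dif_pos hl, dif_pos hk]
      exact hbdec ⟨k, hk⟩ ⟨l, hl⟩ hkl
    · rw [dif_neg hl]
      exact Nat.zero_le _
  -- checkpoints in ℕ form
  have hcheckN : ∀ j : ℕ,
      (∑ i ∈ univ.filter (fun i : Fin t => (i : ℕ) < j), a' i * b' i)
        ≤ ∑ k ∈ range (∑ i ∈ univ.filter (fun i : Fin t => (i : ℕ) < j), a' i), B k := by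
    intro j
    rcases Nat.eq_zero_or_pos j with rfl | hj
    · simp
    · have hj' : min (j - 1) (t - 1) < t := by omega
      set j' : Fin t := ⟨min (j - 1) (t - 1), hj'⟩ with hj'def
      have hfe : univ.filter (fun i : Fin t => i ≤ j') = univ.filter (fun i : Fin t => (i : ℕ) < j) := by
        ext i
        simp only [Finset.mem_filter, Finset.mem_univ, true_and, Fin.le_def, hj'def]
        have := i.isLt
        omega
      have hNle : (∑ i ∈ univ.filter (fun i : Fin t => (i : ℕ) < j), a' i) ≤ T :=
        le_trans (Finset.sum_le_sum_of_subset (Finset.filter_subset _ _)) hT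
      have := hcheck j'
      rw [hfe, convB b _ hNle] at this
      exact this
  have htotalN : ∑ k ∈ range T, B k = (∑ i, a' i * b' i) + (T - ∑ i, a' i) := by
    have huniv : univ.filter (fun k : Fin T => (k : ℕ) < T) = univ :=
      Finset.filter_true_of_mem fun k _ => k.isLt
    have := convB b T le_rfl
    rw [huniv] at this
    rw [← this, htotal]
  -- main sub-multiset bound
  have hkey : ∀ s : Multiset ℕ, s ≤ μ → Multiset.card s ≤ ℓ → s.sum ≤ ∑ k ∈ range ℓ, B k := by
    intro s hs hcard
    have hd1 : s - (∑ i, Multiset.replicate (a' i) (b' i)) ≤ Multiset.replicate (T - ∑ i, a' i) 1 :=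
      Multiset.sub_le_iff_le_add.mpr (by rw [add_comm]; exact hs)
    obtain ⟨n, hnle, hrepn⟩ := Multiset.le_replicate_iff.mp hd1
    have hd2 : s ∩ (∑ i, Multiset.replicate (a' i) (b' i)) ≤ ∑ i, Multiset.replicate (a' i) (b' i) :=
      Multiset.inter_le_right
    obtain ⟨g, hg, hgsum⟩ := decomp_sum univ (fun i => Multiset.replicate (a' i) (b' i)) _ hd2
    have hmex : ∀ i, ∃ mi ≤ a' i, g i = Multiset.replicate mi (b' i) := fun i =>
      Multiset.le_replicate_iff.mp (hg i)
    choose mf hm1 hm2 using hmex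
    have hsdecomp : s = s - (∑ i, Multiset.replicate (a' i) (b' i))
        + s ∩ (∑ i, Multiset.replicate (a' i) (b' i)) :=
      (Multiset.sub_add_inter _ _).symm
    have hsum2 : ∀ F : Finset (Fin t), (∑ i ∈ F, g i).sum = ∑ i ∈ F, (g i).sum := by
      intro F
      induction F using Finset.cons_induction with
      | empty => simp
      | cons a F ha ih => rw [Finset.sum_cons, Finset.sum_cons, Multiset.sum_add, ih]
    have hcard2 : ∀ F : Finset (Fin t),
        Multiset.card (∑ i ∈ F, g i) = ∑ i ∈ F, Multiset.card (g i) := by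
      intro F
      induction F using Finset.cons_induction with
      | empty => simp
      | cons a F ha ih => rw [Finset.sum_cons, Finset.sum_cons, Multiset.card_add, ih]
    have hssum : s.sum = (∑ i, mf i * b' i) + n := by
      conv_lhs => rw [hsdecomp]
      rw [Multiset.sum_add, hrepn, hgsum, Multiset.sum_replicate, smul_eq_mul, mul_one,
        hsum2 univ]
      have h2 : (∑ i, (g i).sum) = ∑ i, mf i * b' i := by
        apply Finset.sum_congr rfl
        intro i _
        rw [hm2 i, Multiset.sum_replicate, smul_eq_mul]
      rw [h2]
      ring
    have hscard : Multiset.card s = (∑ i, mf i) + n := by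
      conv_lhs => rw [hsdecomp]
      rw [Multiset.card_add, hrepn, hgsum, Multiset.card_replicate, hcard2 univ]
      have h2 : (∑ i, Multiset.card (g i)) = ∑ i, mf i := by
        apply Finset.sum_congr rfl
        intro i _
        rw [hm2 i, Multiset.card_replicate]
      rw [h2]
      ring
    have hcb := core_bound t T a' b' ha' hb'1 hb'dec B hB hT hcheckN htotalN mf n hm1 hnle
    have hmono : ∑ k ∈ range ((∑ i, mf i) + n), B k ≤ ∑ k ∈ range ℓ, B k :=
      Finset.sum_le_sum_of_subset (Finset.range_subset_range.mpr (by omega))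
    rw [hssum]
    exact le_trans hcb hmono
  -- the taken prefix is a sub-multiset of μ of size ≤ ℓ
  set l := Multiset.sort μ (· ≤ ·) with hldef
  have hsub : ((l.reverse.take ℓ : List ℕ) : Multiset ℕ) ≤ μ := by
    calc ((l.reverse.take ℓ : List ℕ) : Multiset ℕ)
        ≤ (l.reverse : Multiset ℕ) := Multiset.coe_le.mpr (List.take_sublist _ _).subperm
      _ = (l : Multiset ℕ) := Multiset.coe_reverse l
      _ = μ := Multiset.sort_eq _ _
  have hcard : Multiset.card ((l.reverse.take ℓ : List ℕ) : Multiset ℕ) ≤ ℓ := by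
    rw [Multiset.coe_card, List.length_take]
    exact min_le_left _ _
  have := hkey _ hsub hcard
  rw [Multiset.sum_coe] at this
  calc (l.reverse.take ℓ).sum ≤ ∑ k ∈ range ℓ, B k := this
    _ = ∑ k ∈ Finset.univ.filter (fun k : Fin T => (k : ℕ) < ℓ), b k := (convB b ℓ hℓT).symm
end

section
/- Let a, b be positive integers, v ≥ 0 an integer, and let a_1 > a_2 > ... > a_v be integers, all of the same parity as a+b-1, with a - b + 1 < a_j < a + b - 1 for all j. Define the partition O_v whose parts are: the number a - b + 1; two copies of (a_j + a_{j+1})/2 for each j ∈ [1, v-1] with j ≡ v - 1 (mod 2); together with the part a + b - 1 if v is even, or two copies of (a + b - 1 + a_1)/2 if v is odd. Define the partition O whose parts are two copies of a together with a_1, ..., a_v. Then O_v and O have the same total sum, and O_v dominates O (for every t, the sum of the t largest parts of O_v is ≥ the sum of the t largest parts of O). -/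
private lemma take_sum_mono_cons {x : ℚ} {L : List ℚ} (hx : ∀ y ∈ L, y ≤ x) {n : ℕ}
    (hn : n ≤ L.length) : (L.take n).sum ≤ ((x :: L).take n).sum := by
  cases n with
  | zero => simp
  | succ k =>
    have hk : k < L.length := hn
    rw [List.take_succ_cons, List.sum_cons, List.sum_take_succ L k hk]
    have h1 : L[k] ≤ x := hx _ (List.getElem_mem hk)
    linarith

private lemma sum_le_take_of_sorted : ∀ (L : List ℚ), L.Pairwise (· ≥ ·) → ∀ (N : Multiset ℚ),
    N ≤ ↑L → N.sum ≤ (L.take (Multiset.card N)).sum := by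
  intro L
  induction L with
  | nil =>
    intro _ N hN
    have : N = 0 := Multiset.le_zero.mp (by simpa using hN)
    simp [this]
  | cons x L ih =>
    intro hs N hN
    rcases List.pairwise_cons.mp hs with ⟨hx, hL⟩
    have hcoe : ((x :: L : List ℚ) : Multiset ℚ) = x ::ₘ (↑L : Multiset ℚ) := rfl
    by_cases hmem : x ∈ N
    · have h1 : N.erase x ≤ ((x :: L : List ℚ) : Multiset ℚ).erase x :=
        Multiset.erase_le_erase x hN
      have h3 : N.erase x ≤ (↑L : Multiset ℚ) := by
        rwa [hcoe, Multiset.erase_cons_head] at h1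
      have h4 := ih hL _ h3
      have h5 : N = x ::ₘ N.erase x := (Multiset.cons_erase hmem).symm
      have hcard : Multiset.card N = Multiset.card (N.erase x) + 1 := by
        conv_lhs => rw [h5]
        simp
      have hsum : N.sum = x + (N.erase x).sum := by conv_lhs => rw [h5]; rw [Multiset.sum_cons]
      rw [hcard, List.take_succ_cons, List.sum_cons, hsum]
      linarith
    · have h3 : N ≤ (↑L : Multiset ℚ) := by
        rw [Multiset.le_iff_count] at hN ⊢
        intro y
        by_cases hy : y = x
        · subst hy; simp [Multiset.count_eq_zero_of_notMem hmem]
        · have := hN y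
          rwa [hcoe, Multiset.count_cons_of_ne hy] at this
      have h4 := ih hL _ h3
      have hle : Multiset.card N ≤ L.length := by
        have := Multiset.card_le_card h3
        simpa using this
      exact h4.trans (take_sum_mono_cons hx hle)

private lemma bind_rep2_mono {s t : Multiset ℕ} (f : ℕ → Multiset ℚ) (h : s ≤ t) :
    s.bind f ≤ t.bind f := by
  obtain ⟨u, rfl⟩ := Multiset.le_iff_exists_add.mp h
  rw [Multiset.add_bind]
  exact self_le_add_right _ _

private lemma range_le_range {k w : ℕ} (h : k ≤ w) : Multiset.range k ≤ Multiset.range w := by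
  rw [← Finset.range_val, ← Finset.range_val, Finset.val_le_iff]
  exact Finset.range_subset_range.mpr h

private lemma bind_rep2_sum (f : ℕ → ℚ) (k : ℕ) :
    ((Multiset.range k).bind (fun i => Multiset.replicate 2 (f i))).sum
      = ∑ i ∈ Finset.range k, (f i + f i) := by
  rw [Multiset.sum_bind]
  have h1 : ∀ i : ℕ, (Multiset.replicate 2 (f i)).sum = f i + f i := by
    intro i
    rw [Multiset.sum_replicate, two_smul]
  simp only [h1, ← Finset.range_val]
  rfl

private lemma bind_rep2_card (f : ℕ → ℚ) (k : ℕ) :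
    Multiset.card ((Multiset.range k).bind (fun i => Multiset.replicate 2 (f i))) = 2 * k := by
  rw [Multiset.card_bind]
  simp [Function.comp]
  omega

private lemma bind_rep2_succ (f : ℕ → ℚ) (k : ℕ) :
    (Multiset.range (k+1)).bind (fun i => Multiset.replicate 2 (f i))
      = Multiset.replicate 2 (f k) + (Multiset.range k).bind (fun i => Multiset.replicate 2 (f i)) := by
  rw [Multiset.range_succ, Multiset.cons_bind]

private lemma sum_pairs (f : ℕ → ℚ) : ∀ w : ℕ,
    ∑ i ∈ Finset.range w, (f (2*i) + f (2*i+1)) = ∑ j ∈ Finset.range (2*w), f j := by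
  intro w
  induction w with
  | zero => simp
  | succ n ih =>
    rw [Finset.sum_range_succ, ih]
    have h2 : 2 * (n+1) = (2*n+1)+1 := by ring
    rw [h2, Finset.sum_range_succ, Finset.sum_range_succ]
    ring

private lemma filter_even_eq {v w : ℕ} (hv : v = 2*w) :
    (Finset.range (v-1)).filter (fun j => (j+1) % 2 = (v-1) % 2)
      = (Finset.range w).image (fun k => 2*k) := by
  ext j
  simp only [Finset.mem_filter, Finset.mem_range, Finset.mem_image]
  constructor
  · rintro ⟨h1, h2⟩
    exact ⟨j/2, by omega, by omega⟩
  · rintro ⟨k, hk, rfl⟩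
    omega

private lemma filter_odd_eq {v w : ℕ} (hv : v = 2*w+1) :
    (Finset.range (v-1)).filter (fun j => (j+1) % 2 = (v-1) % 2)
      = (Finset.range w).image (fun k => 2*k+1) := by
  ext j
  simp only [Finset.mem_filter, Finset.mem_range, Finset.mem_image]
  constructor
  · rintro ⟨h1, h2⟩
    exact ⟨j/2, by omega, by omega⟩
  · rintro ⟨k, hk, rfl⟩
    omega

private lemma filter_val_even {v w : ℕ} (hv : v = 2*w) :
    ((Finset.range (v-1)).filter (fun j => (j+1) % 2 = (v-1) % 2)).val
      = (Multiset.range w).map (fun k => 2*k) := by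
  rw [filter_even_eq hv, Finset.image_val_of_injOn (by intro x _ y _ h; simp only [] at h; omega),
    Finset.range_val]

private lemma filter_val_odd {v w : ℕ} (hv : v = 2*w+1) :
    ((Finset.range (v-1)).filter (fun j => (j+1) % 2 = (v-1) % 2)).val
      = (Multiset.range w).map (fun k => 2*k+1) := by
  rw [filter_odd_eq hv, Finset.image_val_of_injOn (by intro x _ y _ h; simp only [] at h; omega),
    Finset.range_val]
/-- Orbit-closure lemma (first lemma of "Une remarque sur les orbites unipotentes"):
the partition `O_v` with parts `a-b+1`, two copies of `(a_j + a_{j+1})/2` for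
`j ≡ v-1 (mod 2)`, `1 ≤ j < v`, plus `a+b-1` (v even) or two copies of
`(a+b-1+a_1)/2` (v odd), has the same total as, and dominates, the partition `O`
with parts two copies of `a` and the `a_j`. Here `a_1 > ... > a_v` are integers of
the parity of `a+b-1` with `a-b+1 < a_j < a+b-1`, encoded as `α (j-1) = a_j`. -/
theorem stmt_8 (a b v : ℕ) (ha : 0 < a) (hb : 0 < b) (α : ℕ → ℤ)
    (hrange : ∀ j < v, (a : ℤ) - b + 1 < α j ∧ α j < (a : ℤ) + b - 1)
    (hpar : ∀ j < v, α j % 2 = ((a : ℤ) + b - 1) % 2)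
    (hdec : ∀ i j, i < j → j < v → α j < α i) :
    let Ov : Multiset ℚ :=
      {(a : ℚ) - b + 1}
      + ((Finset.range (v - 1)).filter (fun j => (j + 1) % 2 = (v - 1) % 2)).val.bind
          (fun j => Multiset.replicate 2 (((α j : ℚ) + (α (j + 1) : ℚ)) / 2))
      + (if v % 2 = 0 then {(a : ℚ) + b - 1}
         else Multiset.replicate 2 (((a : ℚ) + b - 1 + (α 0 : ℚ)) / 2))
    let O : Multiset ℚ :=
      Multiset.replicate 2 (a : ℚ) + (Finset.range v).val.map (fun j => (α j : ℚ))
    Ov.sum = O.sum ∧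
      ∀ t : ℕ, ((O.sort (· ≤ ·)).reverse.take t).sum ≤ ((Ov.sort (· ≤ ·)).reverse.take t).sum := by
  intro Ov O
  have hOv : Ov = {(a : ℚ) - b + 1}
      + ((Finset.range (v - 1)).filter (fun j => (j + 1) % 2 = (v - 1) % 2)).val.bind
          (fun j => Multiset.replicate 2 (((α j : ℚ) + (α (j + 1) : ℚ)) / 2))
      + (if v % 2 = 0 then {(a : ℚ) + b - 1}
         else Multiset.replicate 2 (((a : ℚ) + b - 1 + (α 0 : ℚ)) / 2)) := rfl
  have hO : O = Multiset.replicate 2 (a : ℚ)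
      + (Finset.range v).val.map (fun j => (α j : ℚ)) := rfl
  have ha1 : (1:ℚ) ≤ (a:ℚ) := by exact_mod_cast ha
  have hb1 : (1:ℚ) ≤ (b:ℚ) := by exact_mod_cast hb
  have hub : ∀ j, j < v → (α j : ℚ) ≤ (a:ℚ) + (b:ℚ) - 3 := by
    intro j hj
    have h1 := (hrange j hj).2
    have h2 := hpar j hj
    have h3 : α j ≤ (a:ℤ) + (b:ℤ) - 3 := by omega
    calc (α j : ℚ) ≤ (((a:ℤ) + (b:ℤ) - 3 : ℤ) : ℚ) := by exact_mod_cast h3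
    _ = (a:ℚ) + (b:ℚ) - 3 := by push_cast; ring
  have hlb : ∀ j, j < v → (a:ℚ) - (b:ℚ) + 3 ≤ (α j : ℚ) := by
    intro j hj
    have h1 := (hrange j hj).1
    have h2 := hpar j hj
    have h3 : (a:ℤ) - (b:ℤ) + 3 ≤ α j := by omega
    calc (a:ℚ) - (b:ℚ) + 3 = (((a:ℤ) - (b:ℤ) + 3 : ℤ) : ℚ) := by push_cast; ring
    _ ≤ (α j : ℚ) := by exact_mod_cast h3
  have key : Ov.sum = O.sum ∧ Multiset.card Ov = v + 2 ∧
      ∀ m r : ℕ, m ≤ 2 → r ≤ v → ∃ N : Multiset ℚ, N ≤ Ov ∧ Multiset.card N = m + r ∧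
        (m : ℚ) * (a:ℚ) + (∑ j ∈ Finset.range r, (α j : ℚ)) ≤ N.sum := by
    rcases Nat.even_or_odd v with ⟨w, hw⟩ | ⟨w, hw⟩
    · -- v even, v = 2*w
      have hv2 : v = 2*w := by omega
      set PP : ℕ → ℚ := fun k => ((α (2*k) : ℚ) + (α (2*k+1) : ℚ))/2 with hPP
      set bindP : ℕ → Multiset ℚ :=
        fun k => (Multiset.range k).bind (fun i => Multiset.replicate 2 (PP i)) with hbindP
      have hOv3 : Ov = {(a:ℚ) - b + 1} + bindP w + {(a:ℚ) + b - 1} := by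
        rw [hOv, if_pos (by omega : v % 2 = 0), filter_val_even hv2, Multiset.bind_map]
      have hbsum : ∀ k, (bindP k).sum = ∑ j ∈ Finset.range (2*k), (α j : ℚ) := by
        intro k
        rw [hbindP, bind_rep2_sum, ← sum_pairs (fun j => (α j : ℚ)) k]
        apply Finset.sum_congr rfl
        intro i _
        rw [hPP]
        ring
      have hbcard : ∀ k, Multiset.card (bindP k) = 2*k := by
        intro k; rw [hbindP]; exact bind_rep2_card PP k
      have hble : ∀ k, k ≤ w → bindP k ≤ bindP w := by
        intro k hk; rw [hbindP]; exact bind_rep2_mono _ (range_le_range hk)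
      have hsingle : ∀ k, k + 1 ≤ w → {PP k} + bindP k ≤ bindP w := by
        intro k hk
        refine le_trans ?_ (hble (k+1) hk)
        rw [hbindP]
        simp only []
        rw [bind_rep2_succ]
        apply add_le_add_left
        rw [← Multiset.replicate_one]
        exact (Multiset.replicate_le_replicate _).mpr (by norm_num)
      have hsub : ∀ B1 B2 B3 : Multiset ℚ, B1 ≤ {(a:ℚ) - b + 1} → B2 ≤ bindP w →
          B3 ≤ {(a:ℚ) + b - 1} → B1 + B2 + B3 ≤ Ov := by
        intro B1 B2 B3 h1 h2 h3
        rw [hOv3]; exact add_le_add (add_le_add h1 h2) h3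
      have hsumOv : Ov.sum = O.sum := by
        rw [hOv3, hO, Multiset.sum_add, Multiset.sum_add, Multiset.sum_add, hbsum,
          Multiset.sum_singleton, Multiset.sum_singleton, Multiset.sum_replicate, two_nsmul]
        have hBsum : ((Finset.range v).val.map (fun j => (α j : ℚ))).sum
            = ∑ j ∈ Finset.range v, (α j : ℚ) := rfl
        rw [hBsum, ← hv2]
        ring
      have hcard : Multiset.card Ov = v + 2 := by
        rw [hOv3, Multiset.card_add, Multiset.card_add, hbcard, Multiset.card_singleton,
          Multiset.card_singleton]
        omega
      refine ⟨hsumOv, hcard, ?_⟩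
      intro m r hm hr
      rcases Nat.even_or_odd r with ⟨k, hk⟩ | ⟨k, hk⟩
      · have hr2 : r = 2*k := by omega
        have hkw : k ≤ w := by omega
        interval_cases m
        · refine ⟨0 + bindP k + 0, hsub _ _ _ (Multiset.zero_le _) (hble k hkw) (Multiset.zero_le _), ?_, ?_⟩
          · simp only [Multiset.card_add, hbcard, Multiset.card_zero]
            omega
          · rw [hr2]
            simp only [Multiset.sum_add, hbsum, Multiset.sum_zero]
            push_cast
            linarith
        · refine ⟨0 + bindP k + {(a:ℚ)+b-1}, hsub _ _ _ (Multiset.zero_le _) (hble k hkw) le_rfl, ?_, ?_⟩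
          · simp only [Multiset.card_add, hbcard, Multiset.card_zero, Multiset.card_singleton]
            omega
          · rw [hr2]
            simp only [Multiset.sum_add, hbsum, Multiset.sum_zero, Multiset.sum_singleton]
            push_cast
            linarith
        · refine ⟨{(a:ℚ)-b+1} + bindP k + {(a:ℚ)+b-1},
            hsub _ _ _ le_rfl (hble k hkw) le_rfl, ?_, ?_⟩
          · simp only [Multiset.card_add, hbcard, Multiset.card_singleton]
            omega
          · rw [hr2]
            simp only [Multiset.sum_add, hbsum, Multiset.sum_singleton]
            push_cast
            linarith
      · -- r = 2k+1, so k+1 ≤ w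
        have hk1 : k + 1 ≤ w := by omega
        interval_cases m
        · refine ⟨0 + bindP k + {(a:ℚ)+b-1}, hsub _ _ _ (Multiset.zero_le _) (hble k (by omega)) le_rfl, ?_, ?_⟩
          · simp only [Multiset.card_add, hbcard, Multiset.card_zero, Multiset.card_singleton]
            omega
          · rw [hk]
            simp only [Multiset.sum_add, hbsum, Multiset.sum_zero, Multiset.sum_singleton,
              Finset.sum_range_succ]
            push_cast
            linarith [hub (2*k) (by omega)]
        · refine ⟨0 + ({PP k} + bindP k) + {(a:ℚ)+b-1},
            hsub _ _ _ (Multiset.zero_le _) (hsingle k hk1) le_rfl, ?_, ?_⟩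
          · simp only [Multiset.card_add, hbcard, Multiset.card_zero, Multiset.card_singleton]
            omega
          · rw [hk]
            simp only [Multiset.sum_add, hbsum, Multiset.sum_zero, Multiset.sum_singleton,
              Finset.sum_range_succ, hPP]
            push_cast
            linarith [hub (2*k) (by omega), hlb (2*k+1) (by omega)]
        · refine ⟨0 + bindP (k+1) + {(a:ℚ)+b-1},
            hsub _ _ _ (Multiset.zero_le _) (hble (k+1) hk1) le_rfl, ?_, ?_⟩
          · simp only [Multiset.card_add, hbcard, Multiset.card_zero, Multiset.card_singleton]
            omega
          · rw [hk]
            have h22 : 2*(k+1) = (2*k+1)+1 := by omega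
            simp only [Multiset.sum_add, hbsum, Multiset.sum_zero, Multiset.sum_singleton, h22,
              Finset.sum_range_succ]
            push_cast
            linarith [hlb (2*k+1) (by omega)]
    · -- v odd, v = 2*w+1
      have hv2 : v = 2*w+1 := hw
      set d : ℚ := ((a : ℚ) + b - 1 + (α 0 : ℚ)) / 2 with hd
      set PP : ℕ → ℚ := fun k => ((α (2*k+1) : ℚ) + (α (2*k+1+1) : ℚ))/2 with hPP
      set bindP : ℕ → Multiset ℚ :=
        fun k => (Multiset.range k).bind (fun i => Multiset.replicate 2 (PP i)) with hbindP
      have hOv3 : Ov = {(a:ℚ) - b + 1} + bindP w + Multiset.replicate 2 d := by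
        rw [hOv, if_neg (by omega : ¬ v % 2 = 0), filter_val_odd hv2, Multiset.bind_map]
      have hbsum : ∀ k, (bindP k).sum = ∑ j ∈ Finset.range (2*k), (α (j+1) : ℚ) := by
        intro k
        rw [hbindP, bind_rep2_sum, ← sum_pairs (fun j => (α (j+1) : ℚ)) k]
        apply Finset.sum_congr rfl
        intro i _
        rw [hPP]
        ring
      have hbcard : ∀ k, Multiset.card (bindP k) = 2*k := by
        intro k; rw [hbindP]; exact bind_rep2_card PP k
      have hble : ∀ k, k ≤ w → bindP k ≤ bindP w := by
        intro k hk; rw [hbindP]; exact bind_rep2_mono _ (range_le_range hk)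
      have hsingle : ∀ k, k + 1 ≤ w → {PP k} + bindP k ≤ bindP w := by
        intro k hk
        refine le_trans ?_ (hble (k+1) hk)
        rw [hbindP]
        simp only []
        rw [bind_rep2_succ]
        apply add_le_add_left
        rw [← Multiset.replicate_one]
        exact (Multiset.replicate_le_replicate _).mpr (by norm_num)
      have hdle : ({d} : Multiset ℚ) ≤ Multiset.replicate 2 d := by
        rw [← Multiset.replicate_one]
        exact (Multiset.replicate_le_replicate _).mpr (by norm_num)
      have hsub : ∀ B1 B2 B3 : Multiset ℚ, B1 ≤ {(a:ℚ) - b + 1} → B2 ≤ bindP w →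
          B3 ≤ Multiset.replicate 2 d → B1 + B2 + B3 ≤ Ov := by
        intro B1 B2 B3 h1 h2 h3
        rw [hOv3]; exact add_le_add (add_le_add h1 h2) h3
      have hshift : ∀ n : ℕ, ∑ j ∈ Finset.range (n+1), (α j : ℚ)
          = (∑ j ∈ Finset.range n, (α (j+1) : ℚ)) + (α 0 : ℚ) :=
        fun n => Finset.sum_range_succ' (fun j => (α j : ℚ)) n
      have hsumOv : Ov.sum = O.sum := by
        rw [hOv3, hO, Multiset.sum_add, Multiset.sum_add, Multiset.sum_add, hbsum,
          Multiset.sum_singleton, Multiset.sum_replicate, Multiset.sum_replicate,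
          two_nsmul, two_nsmul]
        have hBsum : ((Finset.range v).val.map (fun j => (α j : ℚ))).sum
            = ∑ j ∈ Finset.range v, (α j : ℚ) := rfl
        rw [hBsum, hv2, hshift (2*w), hd]
        ring
      have hcard : Multiset.card Ov = v + 2 := by
        rw [hOv3, Multiset.card_add, Multiset.card_add, hbcard, Multiset.card_singleton,
          Multiset.card_replicate]
        omega
      refine ⟨hsumOv, hcard, ?_⟩
      intro m r hm hr
      rcases Nat.even_or_odd r with ⟨k, hk⟩ | ⟨k, hk⟩
      · have hr2 : r = 2*k := by omega
        have hkw : k ≤ w := by omega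
        interval_cases m
        · -- m = 0, r = 2k : split on k
          rcases Nat.eq_zero_or_pos k with hk0 | hkpos
          · refine ⟨0 + 0 + 0, hsub _ _ _ (Multiset.zero_le _) (Multiset.zero_le _) (Multiset.zero_le _), ?_, ?_⟩
            · simp only [Multiset.card_add, Multiset.card_zero]
              omega
            · rw [hr2, hk0]
              simp
          · obtain ⟨k', rfl⟩ : ∃ k', k = k' + 1 := ⟨k - 1, by omega⟩
            refine ⟨0 + bindP k' + Multiset.replicate 2 d,
              hsub _ _ _ (Multiset.zero_le _) (hble k' (by omega)) le_rfl, ?_, ?_⟩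
            · simp only [Multiset.card_add, hbcard, Multiset.card_zero, Multiset.card_replicate]
              omega
            · rw [hr2]
              have h21 : 2*(k'+1) = (2*k'+1)+1 := by omega
              rw [h21, Finset.sum_range_succ, hshift (2*k')]
              simp only [Multiset.sum_add, hbsum, Multiset.sum_zero, Multiset.sum_replicate,
                two_nsmul, hd]
              push_cast
              linarith [hub (2*k'+1) (by omega)]
        · -- m = 1, r = 2k
          rcases Nat.eq_zero_or_pos k with hk0 | hkpos
          · refine ⟨0 + 0 + {d}, hsub _ _ _ (Multiset.zero_le _) (Multiset.zero_le _) hdle, ?_, ?_⟩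
            · simp only [Multiset.card_add, Multiset.card_zero, Multiset.card_singleton]
              omega
            · rw [hr2, hk0]
              simp only [Multiset.sum_add, Multiset.sum_zero, Multiset.sum_singleton, hd]
              rw [show (2*0 : ℕ) = 0 from rfl]
              rw [Finset.sum_range_zero]
              push_cast
              linarith [hlb 0 (by omega)]
          · obtain ⟨k', rfl⟩ : ∃ k', k = k' + 1 := ⟨k - 1, by omega⟩
            refine ⟨0 + ({PP k'} + bindP k') + Multiset.replicate 2 d,
              hsub _ _ _ (Multiset.zero_le _) (hsingle k' (by omega)) le_rfl, ?_, ?_⟩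
            · simp only [Multiset.card_add, hbcard, Multiset.card_zero, Multiset.card_singleton,
                Multiset.card_replicate]
              omega
            · rw [hr2]
              have h21 : 2*(k'+1) = (2*k'+1)+1 := by omega
              rw [h21, Finset.sum_range_succ, hshift (2*k')]
              simp only [Multiset.sum_add, hbsum, Multiset.sum_zero, Multiset.sum_singleton,
                Multiset.sum_replicate, two_nsmul, hd, hPP]
              push_cast
              linarith [hub (2*k'+1) (by omega), hlb (2*k'+1+1) (by omega)]
        · -- m = 2, r = 2k
          refine ⟨0 + bindP k + Multiset.replicate 2 d,
            hsub _ _ _ (Multiset.zero_le _) (hble k hkw) le_rfl, ?_, ?_⟩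
          · simp only [Multiset.card_add, hbcard, Multiset.card_zero, Multiset.card_replicate]
            omega
          · rw [hr2]
            have hsplitsum : ∑ j ∈ Finset.range (2*k), (α j : ℚ)
                = (∑ j ∈ Finset.range (2*k+1), (α j : ℚ)) - (α (2*k) : ℚ) := by
              rw [Finset.sum_range_succ]; ring
            rw [hsplitsum, hshift (2*k)]
            simp only [Multiset.sum_add, hbsum, Multiset.sum_zero, Multiset.sum_replicate,
              two_nsmul, hd]
            push_cast
            linarith [hlb (2*k) (by omega)]
      · -- r = 2k+1, k ≤ w
        have hkw : k ≤ w := by omega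
        interval_cases m
        · refine ⟨0 + bindP k + {d}, hsub _ _ _ (Multiset.zero_le _) (hble k hkw) hdle, ?_, ?_⟩
          · simp only [Multiset.card_add, hbcard, Multiset.card_zero, Multiset.card_singleton]
            omega
          · rw [hk, hshift (2*k)]
            simp only [Multiset.sum_add, hbsum, Multiset.sum_zero, Multiset.sum_singleton, hd]
            push_cast
            linarith [hub 0 (by omega)]
        · refine ⟨0 + bindP k + Multiset.replicate 2 d,
            hsub _ _ _ (Multiset.zero_le _) (hble k hkw) le_rfl, ?_, ?_⟩
          · simp only [Multiset.card_add, hbcard, Multiset.card_zero, Multiset.card_replicate]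
            omega
          · rw [hk, hshift (2*k)]
            simp only [Multiset.sum_add, hbsum, Multiset.sum_zero, Multiset.sum_replicate,
              two_nsmul, hd]
            push_cast
            linarith
        · refine ⟨{(a:ℚ)-b+1} + bindP k + Multiset.replicate 2 d,
            hsub _ _ _ le_rfl (hble k hkw) le_rfl, ?_, ?_⟩
          · simp only [Multiset.card_add, hbcard, Multiset.card_singleton,
              Multiset.card_replicate]
            omega
          · rw [hk, hshift (2*k)]
            simp only [Multiset.sum_add, hbsum, Multiset.sum_singleton, Multiset.sum_replicate,
              two_nsmul, hd]
            push_cast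
            linarith

  obtain ⟨hsum, hcardOv, hconstruct⟩ := key
  refine ⟨hsum, ?_⟩
  intro t
  set LO := (O.sort (· ≤ ·)).reverse with hLOdef
  set LV := (Ov.sort (· ≤ ·)).reverse with hLVdef
  have hLOsorted : LO.Pairwise (· ≥ ·) := by
    rw [hLOdef, List.pairwise_reverse]; exact Multiset.pairwise_sort _ (· ≤ ·)
  have hLVsorted : LV.Pairwise (· ≥ ·) := by
    rw [hLVdef, List.pairwise_reverse]; exact Multiset.pairwise_sort _ (· ≤ ·)
  have hLOcoe : (↑LO : Multiset ℚ) = O := by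
    rw [hLOdef, Multiset.coe_reverse, Multiset.sort_eq]
  have hLVcoe : (↑LV : Multiset ℚ) = Ov := by
    rw [hLVdef, Multiset.coe_reverse, Multiset.sort_eq]
  have hcardB : Multiset.card ((Finset.range v).val.map (fun j => (α j : ℚ))) = v := by
    rw [Multiset.card_map, ← Finset.card_def, Finset.card_range]
  have hcardO : Multiset.card O = v + 2 := by
    rw [hO, Multiset.card_add, Multiset.card_replicate, hcardB]
    omega
  have hlenLO : LO.length = v + 2 := by
    have := congrArg Multiset.card hLOcoe
    rwa [Multiset.coe_card, hcardO] at this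
  have hlenLV : LV.length = v + 2 := by
    have := congrArg Multiset.card hLVcoe
    rwa [Multiset.coe_card, hcardOv] at this
  set t' := min t (v+2) with ht'
  have htakeO : LO.take t = LO.take t' := by
    rw [List.take_eq_take_iff, hlenLO]; omega
  have htakeV : LV.take t = LV.take t' := by
    rw [List.take_eq_take_iff, hlenLV]; omega
  set T : Multiset ℚ := ↑(LO.take t') with hT
  have hTle : T ≤ O := by
    rw [hT, ← hLOcoe]
    exact Multiset.coe_le.mpr (List.take_sublist _ _).subperm
  have hTcard : Multiset.card T = t' := by
    rw [hT, Multiset.coe_card, List.length_take, hlenLO]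
    omega
  have hTsum : T.sum = (LO.take t).sum := by
    rw [htakeO, hT, Multiset.sum_coe]
  set A := Multiset.replicate 2 ((a:ℚ)) with hA
  set B := (Finset.range v).val.map (fun j => ((α j : ℚ))) with hB
  set TA := T ∩ A with hTA
  set TB := T - A with hTB
  have hsplit : TB + TA = T := Multiset.sub_add_inter T A
  have hTAle : TA ≤ A := Multiset.inter_le_right
  have hTBle : TB ≤ B := by
    rw [hTB, Multiset.sub_le_iff_le_add]
    rw [hO] at hTle
    rwa [add_comm B A]
  have hm2 : Multiset.card TA ≤ 2 := by
    have := Multiset.card_le_card hTAle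
    rwa [hA, Multiset.card_replicate] at this
  have hrv : Multiset.card TB ≤ v := by
    have := Multiset.card_le_card hTBle
    rwa [hB, hcardB] at this
  have hmr : Multiset.card TB + Multiset.card TA = t' := by
    have := congrArg Multiset.card hsplit
    rwa [Multiset.card_add, hTcard] at this
  have hTAsum : TA.sum = (Multiset.card TA : ℚ) * (a:ℚ) := by
    have hrep : TA = Multiset.replicate (Multiset.card TA) ((a:ℚ)) :=
      Multiset.eq_replicate_card.mpr
        (fun x hx => Multiset.eq_of_mem_replicate (Multiset.mem_of_le hTAle hx))
    conv_lhs => rw [hrep]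
    rw [Multiset.sum_replicate, nsmul_eq_mul]
  have hTBsum : TB.sum ≤ ∑ j ∈ Finset.range (Multiset.card TB), (α j : ℚ) := by
    have hsorted : ((List.range v).map (fun j => ((α j : ℚ)))).Pairwise (· ≥ ·) := by
      rw [List.pairwise_map]
      apply List.Pairwise.imp_of_mem ?_ (List.pairwise_lt_range (n := v))
      intro i j hi hj hij
      have hjv : j < v := List.mem_range.mp hj
      have hlt : (α j : ℚ) < (α i : ℚ) := by exact_mod_cast hdec i j hij hjv
      exact le_of_lt hlt
    have hcoe2 : (↑((List.range v).map (fun j => ((α j : ℚ)))) : Multiset ℚ) = B := rfl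
    have h5 := sum_le_take_of_sorted _ hsorted TB (by rw [hcoe2]; exact hTBle)
    rw [← List.map_take, List.take_range] at h5
    have hmin : min (Multiset.card TB) v = Multiset.card TB := by omega
    rw [hmin] at h5
    exact h5.trans_eq rfl
  obtain ⟨N, hNle, hNcard, hNsum⟩ := hconstruct (Multiset.card TA) (Multiset.card TB) hm2 hrv
  have h1 : (LO.take t).sum ≤ (Multiset.card TA : ℚ) * (a:ℚ)
      + ∑ j ∈ Finset.range (Multiset.card TB), (α j : ℚ) := by
    rw [← hTsum, ← hsplit, Multiset.sum_add, hTAsum]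
    linarith [hTBsum]
  have h2 : N.sum ≤ (LV.take (Multiset.card N)).sum :=
    sum_le_take_of_sorted LV hLVsorted N (by rw [hLVcoe]; exact hNle)
  have h3 : LV.take (Multiset.card N) = LV.take t := by
    rw [List.take_eq_take_iff, hNcard, hlenLV]
    omega
  rw [h3] at h2
  linarith
end

section
/- Let a, b be positive integers, v ≥ 1 an integer, and let a_1 > a_2 > ... > a_v be integers, all of the same parity as a+b-1, with a - b + 1 < a_j < a + b - 1 for all j. Define the partition O' whose parts are: two copies of (a - b + 1 + a_v)/2; two copies of (a_j + a_{j+1})/2 for each j ∈ [1, v-1] with j ≡ v (mod 2); together with two copies of (a + b - 1 + a_1)/2 if v is even, or one copy of a + b - 1 if v is odd. Define the partition O whose parts are a_1, ..., a_v together with two copies of a. Then O' and O have the same total sum and O' dominates O. -/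
open Finset

lemma take_le_theta (L : List ℚ) (t : ℕ) (θ : ℚ) (ht : t ≤ L.length) :
    (L.take t).sum ≤ t * θ + (L.map (fun x => max (x - θ) 0)).sum := by
  have h1 : (L.take t).sum ≤ ((L.take t).map (fun x => θ + max (x - θ) 0)).sum := by
    have := List.sum_le_sum (l := L.take t) (f := id) (g := fun x => θ + max (x - θ) 0) ?_
    · simpa using this
    · intro x hx
      have : x - θ ≤ max (x - θ) 0 := le_max_left _ _
      simp only [id]; linarith
  have h2 : ((L.take t).map (fun x => θ + max (x - θ) 0)).sum
      = t * θ + ((L.take t).map (fun x => max (x - θ) 0)).sum := by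
    rw [List.sum_map_add]
    simp [List.length_take, Nat.min_eq_left ht, mul_comm]
  have h3 : ((L.take t).map (fun x => max (x - θ) 0)).sum
      ≤ (L.map (fun x => max (x - θ) 0)).sum := by
    conv_rhs => rw [← List.take_append_drop t L]
    rw [List.map_append, List.sum_append]
    have : 0 ≤ ((L.drop t).map (fun x => max (x - θ) 0)).sum :=
      List.sum_nonneg (by intro x hx; rw [List.mem_map] at hx; obtain ⟨y, _, rfl⟩ := hx; positivity)
    linarith
  linarith

lemma mono_of_adj (β : ℕ → ℚ) (N : ℕ) (h : ∀ j < N, β (j+1) ≤ β j) :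
    ∀ i j, i ≤ j → j ≤ N → β j ≤ β i := by
  intro i j hij hjN
  induction j with
  | zero => have : i = 0 := Nat.le_zero.mp hij; subst this; exact le_refl _
  | succ n ih =>
    rcases Nat.eq_or_lt_of_le hij with h' | h'
    · subst h'; exact le_refl _
    · exact (h n (by omega)).trans (ih (by omega) (by omega))

lemma sum_pair (g : ℕ → ℚ) (r : ℕ) :
    ∑ i ∈ range r, (g (2*i) + g (2*i+1)) = ∑ j ∈ range (2*r), g j := by
  induction r with
  | zero => simp
  | succ n ih =>
    rw [Finset.sum_range_succ, ih]
    have h2 : 2*(n+1) = (2*n+1)+1 := by ring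
    rw [h2, Finset.sum_range_succ, Finset.sum_range_succ]; ring
open Finset

def pl (m : ℕ → ℚ) (k : ℕ) : List ℚ := (List.range k).flatMap (fun i => [m i, m i])

lemma pl_succ (m : ℕ → ℚ) (k : ℕ) : pl m (k+1) = pl m k ++ [m k, m k] := by
  simp [pl, List.range_succ]

lemma pl_length (m : ℕ → ℚ) (k : ℕ) : (pl m k).length = 2 * k := by
  induction k with
  | zero => rfl
  | succ n ih => rw [pl_succ, List.length_append, ih]; simp; omega

lemma pl_sum (m : ℕ → ℚ) (k : ℕ) : (pl m k).sum = 2 * ∑ i ∈ range k, m i := by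
  induction k with
  | zero => simp [pl]
  | succ n ih => rw [pl_succ, List.sum_append, ih, Finset.sum_range_succ]; simp; ring

lemma pl_coe (m : ℕ → ℚ) (k : ℕ) :
    (pl m k : Multiset ℚ) = ∑ i ∈ range k, Multiset.replicate 2 (m i) := by
  induction k with
  | zero => simp [pl]
  | succ n ih =>
    rw [pl_succ, Finset.sum_range_succ, ← ih, ← Multiset.coe_add]
    congr 1

lemma pl_mem (m : ℕ → ℚ) (k : ℕ) (x : ℚ) (hx : x ∈ pl m k) : ∃ i < k, x = m i := by
  simp only [pl, List.mem_flatMap, List.mem_range] at hx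
  obtain ⟨i, hi, hx⟩ := hx
  refine ⟨i, hi, ?_⟩
  simpa using hx

lemma pl_sorted (m : ℕ → ℚ) (k : ℕ) (hm : ∀ i j, i ≤ j → j < k → m j ≤ m i) :
    (pl m k).Pairwise (· ≥ ·) := by
  induction k with
  | zero => simp [pl]
  | succ n ih =>
    rw [pl_succ]
    rw [List.pairwise_append]
    refine ⟨ih (fun i j hij hj => hm i j hij (by omega)), by simp, ?_⟩
    intro x hx y hy
    obtain ⟨i, hi, rfl⟩ := pl_mem m n x hx
    have : y = m n := by simp at hy; tauto
    subst this
    exact hm i n (by omega) (by omega)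

lemma pl_take_sum (m : ℕ → ℚ) (k : ℕ) :
    ∀ t ≤ 2 * k, ((pl m k).take t).sum
      = 2 * (∑ i ∈ range (t/2), m i) + ((t % 2 : ℕ) : ℚ) * m (t/2) := by
  induction k with
  | zero => intro t ht; have : t = 0 := by omega
            subst this; simp [pl]
  | succ n ih =>
    intro t ht
    rw [pl_succ, List.take_append, List.sum_append, pl_length]
    rcases le_or_gt t (2*n) with h | h
    · have h0 : t - 2*n = 0 := by omega
      rw [h0, ih t h]; simp
    · have hall : (pl m n).take t = pl m n := List.take_of_length_le (by rw [pl_length]; omega)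
      rw [hall, pl_sum]
      have ht2 : t = 2*n+1 ∨ t = 2*n+2 := by omega
      rcases ht2 with rfl | rfl
      · have e1 : (2*n+1)/2 = n := by omega
        have e2 : (2*n+1) % 2 = 1 := by omega
        rw [e1, e2]
        have : 2*n+1-2*n = 1 := by omega
        rw [this]; simp
      · have e1 : (2*n+2)/2 = n+1 := by omega
        have e2 : (2*n+2) % 2 = 0 := by omega
        rw [e1, e2]
        have : 2*n+2-2*n = 2 := by omega
        rw [this, Finset.sum_range_succ]; simp [List.take]; ring
open Finset

lemma sum_max_split (β : ℕ → ℚ) (v s : ℕ) (θ : ℚ) (hs : s ≤ v)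
    (hup : ∀ j < s, θ ≤ β (j+1)) (hdn : ∀ j, s ≤ j → j < v → β (j+1) ≤ θ) :
    ∑ j ∈ range v, max (β (j+1) - θ) 0 = ∑ j ∈ range s, (β (j+1) - θ) := by
  rw [Finset.range_eq_Ico, ← Finset.sum_Ico_consecutive _ (Nat.zero_le s) hs]
  have h1 : ∑ j ∈ Ico 0 s, max (β (j+1) - θ) 0 = ∑ j ∈ Ico 0 s, (β (j+1) - θ) :=
    Finset.sum_congr rfl (fun j hj => by
      rw [Finset.mem_Ico] at hj
      exact max_eq_left (by have := hup j hj.2; linarith))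
  have h2 : ∑ j ∈ Ico s v, max (β (j+1) - θ) 0 = 0 :=
    Finset.sum_eq_zero (fun j hj => by
      rw [Finset.mem_Ico] at hj
      exact max_eq_right (by have := hdn j hj.1 hj.2; linarith))
  rw [h1, h2, add_zero, ← Finset.range_eq_Ico]

lemma sum_shift (β : ℕ → ℚ) (s : ℕ) :
    ∑ j ∈ range s, β (j+1) = (∑ j ∈ range (s+1), β j) - β 0 := by
  rw [Finset.sum_range_succ' β s]; ring

lemma keyA (a : ℚ) (v : ℕ) (β : ℕ → ℚ)
    (hmono : ∀ i j, i ≤ j → j ≤ v+1 → β j ≤ β i) (h2a : β 0 + β (v+1) = 2*a)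
    (s : ℕ) (hs : s ≤ v) :
    (s+1 : ℚ) * (β s) + 2 * max (a - β s) 0 + ∑ j ∈ range v, max (β (j+1) - β s) 0
      ≤ ∑ j ∈ range (s+1), β j := by
  have hsplit := sum_max_split β v s (β s) hs
    (fun j hj => hmono (j+1) s (by omega) (by omega))
    (fun j hj1 hj2 => hmono s (j+1) (by omega) (by omega))
  rw [hsplit, Finset.sum_sub_distrib, Finset.sum_const, Finset.card_range,
    nsmul_eq_mul, sum_shift]
  have hb0 : β s ≤ β 0 := hmono 0 s (by omega) (by omega)
  have hbl : β (v+1) ≤ β s := hmono s (v+1) (by omega) (by omega)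
  rcases le_total a (β s) with h | h
  · rw [max_eq_right (by linarith)]; push_cast; linarith
  · rw [max_eq_left (by linarith)]; push_cast; linarith

lemma keyB (a : ℚ) (v : ℕ) (β : ℕ → ℚ)
    (hmono : ∀ i j, i ≤ j → j ≤ v+1 → β j ≤ β i) (h2a : β 0 + β (v+1) = 2*a)
    (s : ℕ) (hs : s ≤ v) :
    (s+1 : ℚ) * ((β s + β (s+1))/2) + 2 * max (a - (β s + β (s+1))/2) 0
      + ∑ j ∈ range v, max (β (j+1) - (β s + β (s+1))/2) 0
      ≤ (∑ j ∈ range s, β j) + (β s + β (s+1))/2 := by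
  set θ : ℚ := (β s + β (s+1))/2 with hθ
  have hss : β (s+1) ≤ β s := hmono s (s+1) (by omega) (by omega)
  have hθs : θ ≤ β s := by rw [hθ]; linarith
  have hsθ : β (s+1) ≤ θ := by rw [hθ]; linarith
  have hsplit := sum_max_split β v s θ hs
    (fun j hj => le_trans hθs (hmono (j+1) s (by omega) (by omega)))
    (fun j hj1 hj2 => le_trans (hmono (s+1) (j+1) (by omega) (by omega)) hsθ)
  rw [hsplit, Finset.sum_sub_distrib, Finset.sum_const, Finset.card_range,
    nsmul_eq_mul, sum_shift]
  have hb0 : β s ≤ β 0 := hmono 0 s (by omega) (by omega)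
  have hbl : β (v+1) ≤ β (s+1) := hmono (s+1) (v+1) (by omega) (by omega)
  have hsum : ∑ j ∈ range (s+1), β j = ∑ j ∈ range s, β j + β s := Finset.sum_range_succ β s
  rcases le_total a θ with h | h
  · rw [max_eq_right (by linarith)]; push_cast; rw [hsum]; rw [hθ]; linarith
  · rw [max_eq_left (by linarith)]; push_cast; rw [hsum]; rw [hθ]; linarith

lemma assemble (a : ℚ) (v : ℕ) (β : ℕ → ℚ) (O O' : Multiset ℚ) (L' : List ℚ)
    (hmono : ∀ i j, i ≤ j → j ≤ v+1 → β j ≤ β i)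
    (h2a : β 0 + β (v+1) = 2*a)
    (hO' : (L' : Multiset ℚ) = O')
    (hsorted : L'.Pairwise (· ≥ ·))
    (hlen : L'.length = v + 2)
    (hsum : L'.sum = O.sum)
    (htake : ∀ s, s ≤ v → (L'.take (s+1)).sum
      = if (s+1) % 2 = v % 2 then ∑ j ∈ range (s+1), β j
        else (∑ j ∈ range s, β j) + (β s + β (s+1))/2)
    (hOcard : Multiset.card O = v + 2)
    (hOmap : ∀ f : ℚ → ℚ, (O.map f).sum = 2 * f a + ∑ j ∈ range v, f (β (j+1))) :
    O'.sum = O.sum ∧ ∀ t : ℕ,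
      ((O.sort (· ≤ ·)).reverse.take t).sum ≤ ((O'.sort (· ≤ ·)).reverse.take t).sum := by
  have hrev : (O'.sort (· ≤ ·)).reverse = L' := by
    have hp : List.Perm (O'.sort (· ≤ ·)) L'.reverse := by
      have h1 : ((O'.sort (· ≤ ·) : List ℚ) : Multiset ℚ) = (L'.reverse : Multiset ℚ) := by
        rw [Multiset.sort_eq, ← hO', Multiset.coe_reverse]
      exact Multiset.coe_eq_coe.mp h1
    have s1 : (O'.sort (· ≤ ·)).Pairwise (· ≤ ·) := Multiset.pairwise_sort _ _
    have s2 : L'.reverse.Pairwise (· ≤ ·) := by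
      rw [List.pairwise_reverse]
      exact hsorted
    have := List.Perm.eq_of_pairwise' s1 s2 hp
    rw [this, List.reverse_reverse]
  have hOpsum : O'.sum = L'.sum := by rw [← hO']; simp
  have hsumO : O'.sum = O.sum := by rw [hOpsum, hsum]
  refine ⟨hsumO, ?_⟩
  intro t
  have hlenO : ((O.sort (· ≤ ·)).reverse).length = v + 2 := by
    rw [List.length_reverse, Multiset.length_sort, hOcard]
  have hmapO : ∀ f : ℚ → ℚ, (((O.sort (· ≤ ·)).reverse).map f).sum = (O.map f).sum := by
    intro f
    rw [List.map_reverse, List.sum_reverse]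
    conv_rhs => rw [← Multiset.sort_eq O (· ≤ ·)]
    rfl
  rcases le_or_gt t (v+1) with hle | hgt
  · rcases Nat.eq_zero_or_pos t with rfl | ht0
    · simp
    obtain ⟨s, rfl⟩ : ∃ s, t = s+1 := ⟨t-1, by omega⟩
    have hs : s ≤ v := by omega
    rw [hrev]
    by_cases hpar : (s+1) % 2 = v % 2
    · have hstep := take_le_theta ((O.sort (· ≤ ·)).reverse) (s+1) (β s) (by omega)
      rw [hmapO, hOmap] at hstep
      have hkey := keyA a v β hmono h2a s hs
      rw [htake s hs, if_pos hpar]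
      calc ((O.sort (· ≤ ·)).reverse.take (s+1)).sum
          ≤ (↑(s+1) : ℚ) * β s + (2 * max (a - β s) 0 + ∑ j ∈ range v, max (β (j+1) - β s) 0) := hstep
        _ ≤ ∑ j ∈ range (s+1), β j := by push_cast; push_cast at hkey; linarith
    · have hstep := take_le_theta ((O.sort (· ≤ ·)).reverse) (s+1) ((β s + β (s+1))/2) (by omega)
      rw [hmapO, hOmap] at hstep
      have hkey := keyB a v β hmono h2a s hs
      rw [htake s hs, if_neg hpar]
      calc ((O.sort (· ≤ ·)).reverse.take (s+1)).sum
          ≤ (↑(s+1) : ℚ) * ((β s + β (s+1))/2) + (2 * max (a - (β s + β (s+1))/2) 0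
              + ∑ j ∈ range v, max (β (j+1) - (β s + β (s+1))/2) 0) := hstep
        _ ≤ (∑ j ∈ range s, β j) + (β s + β (s+1))/2 := by push_cast; push_cast at hkey; linarith
  · have e1 : (O.sort (· ≤ ·)).reverse.take t = (O.sort (· ≤ ·)).reverse :=
      List.take_of_length_le (by omega)
    have e2 : (O'.sort (· ≤ ·)).reverse.take t = (O'.sort (· ≤ ·)).reverse := by
      rw [hrev]; exact List.take_of_length_le (by omega)
    rw [e1, e2, hrev]
    have : ((O.sort (· ≤ ·)).reverse).sum = O.sum := by
      have := hmapO id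
      simpa using this
    rw [this, ← hsum]

/-- Orbit-closure lemma (second lemma of "Une remarque sur les orbites unipotentes"):
the partition `O'` with parts two copies of `(a-b+1+a_v)/2`, two copies of
`(a_j + a_{j+1})/2` for `j ≡ v (mod 2)`, `1 ≤ j < v`, plus two copies of
`(a+b-1+a_1)/2` (v even) or one copy of `a+b-1` (v odd), has the same total as,
and dominates, the partition `O` with parts the `a_j` together with two copies
of `a`. Here `a_1 > ... > a_v` are integers of the parity of `a+b-1` with
`a-b+1 < a_j < a+b-1`, encoded as `α (j-1) = a_j`. -/
theorem stmt_9 (a b v : ℕ) (ha : 0 < a) (hb : 0 < b) (hv : 1 ≤ v) (α : ℕ → ℤ)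
    (hrange : ∀ j < v, (a : ℤ) - b + 1 < α j ∧ α j < (a : ℤ) + b - 1)
    (hpar : ∀ j < v, α j % 2 = ((a : ℤ) + b - 1) % 2)
    (hdec : ∀ i j, i < j → j < v → α j < α i) :
    let O' : Multiset ℚ :=
      Multiset.replicate 2 (((a : ℚ) - b + 1 + (α (v - 1) : ℚ)) / 2)
      + ((Finset.range (v - 1)).filter (fun j => (j + 1) % 2 = v % 2)).val.bind
          (fun j => Multiset.replicate 2 (((α j : ℚ) + (α (j + 1) : ℚ)) / 2))
      + (if v % 2 = 0 then Multiset.replicate 2 (((a : ℚ) + b - 1 + (α 0 : ℚ)) / 2)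
         else {(a : ℚ) + b - 1})
    let O : Multiset ℚ :=
      Multiset.replicate 2 (a : ℚ) + (Finset.range v).val.map (fun j => (α j : ℚ))
    O'.sum = O.sum ∧
      ∀ t : ℕ, ((O.sort (· ≤ ·)).reverse.take t).sum ≤ ((O'.sort (· ≤ ·)).reverse.take t).sum := by
  intro O' O
  have hOdef : O = Multiset.replicate 2 (a : ℚ)
      + (Finset.range v).val.map (fun j => (α j : ℚ)) := rfl
  have hO'def : O' = Multiset.replicate 2 (((a : ℚ) - b + 1 + (α (v - 1) : ℚ)) / 2)
      + ((Finset.range (v - 1)).filter (fun j => (j + 1) % 2 = v % 2)).val.bind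
          (fun j => Multiset.replicate 2 (((α j : ℚ) + (α (j + 1) : ℚ)) / 2))
      + (if v % 2 = 0 then Multiset.replicate 2 (((a : ℚ) + b - 1 + (α 0 : ℚ)) / 2)
         else {(a : ℚ) + b - 1}) := rfl
  set β : ℕ → ℚ := fun j => if j = 0 then (a:ℚ)+b-1 else
      if j ≤ v then ((α (j-1) : ℤ) : ℚ) else (a:ℚ)-b+1 with hβ
  have hβ0 : β 0 = (a:ℚ)+b-1 := by simp [hβ]
  have hβlast : β (v+1) = (a:ℚ)-b+1 := by
    simp only [hβ]; rw [if_neg (by omega), if_neg (by omega)]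
  have hβmid : ∀ j, 1 ≤ j → j ≤ v → β j = ((α (j-1) : ℤ) : ℚ) := by
    intro j h1 h2; simp only [hβ]; rw [if_neg (by omega), if_pos h2]
  have hadj : ∀ j < v+1, β (j+1) ≤ β j := by
    intro j hj
    rcases Nat.eq_zero_or_pos j with rfl | hj0
    · rw [hβmid 1 le_rfl hv, hβ0]
      have h := (hrange 0 (by omega)).2
      have h' : ((α 0 : ℤ) : ℚ) < (((a:ℤ) + b - 1 : ℤ) : ℚ) := by exact_mod_cast h
      push_cast at h'
      simpa using h'.le
    rcases Nat.lt_or_ge (j+1) (v+1) with hjv | hjv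
    · rw [hβmid (j+1) (by omega) (by omega), hβmid j (by omega) (by omega)]
      have h := hdec (j-1) j (by omega) (by omega)
      have : j + 1 - 1 = j := by omega
      rw [this]
      exact_mod_cast h.le
    · have hjeq : j = v := by omega
      rw [hjeq, hβlast, hβmid v (by omega) le_rfl]
      have h := (hrange (v-1) (by omega)).1
      have h' : (((a:ℤ) - b + 1 : ℤ) : ℚ) < ((α (v-1) : ℤ) : ℚ) := by exact_mod_cast h
      push_cast at h'
      linarith
  have hmono : ∀ i j, i ≤ j → j ≤ v+1 → β j ≤ β i := mono_of_adj β (v+1) hadj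
  have h2a : β 0 + β (v+1) = 2*(a:ℚ) := by rw [hβ0, hβlast]; ring
  have hOcard : Multiset.card O = v + 2 := by
    rw [hOdef]; simp
  have hOmap : ∀ f : ℚ → ℚ, (O.map f).sum = 2 * f (a:ℚ) + ∑ j ∈ range v, f (β (j+1)) := by
    intro f
    rw [hOdef, Multiset.map_add, Multiset.sum_add, Multiset.map_replicate,
      Multiset.sum_replicate, Multiset.map_map]
    have h1 : ((Finset.range v).val.map (f ∘ fun j => ((α j : ℤ) : ℚ))).sum
        = ∑ j ∈ range v, f ((α j : ℤ) : ℚ) := rfl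
    rw [h1]
    have h2 : ∑ j ∈ range v, f ((α j : ℤ) : ℚ) = ∑ j ∈ range v, f (β (j+1)) := by
      refine Finset.sum_congr rfl (fun j hj => ?_)
      rw [Finset.mem_range] at hj
      rw [hβmid (j+1) (by omega) (by omega)]
      simp
    rw [h2]
    simp [two_nsmul, two_mul]
  rcases Nat.even_or_odd v with ⟨u, hu⟩ | ⟨u, hu⟩
  · -- v even : v = u + u
    have hu2 : v = 2*u := by omega
    have hu1 : 1 ≤ u := by omega
    set m : ℕ → ℚ := fun i => (β (2*i) + β (2*i+1))/2 with hm
    have hmL : ∀ i j, i ≤ j → j < u+1 → m j ≤ m i := by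
      intro i j hij hj
      have h1 : β (2*j) ≤ β (2*i) := hmono _ _ (by omega) (by omega)
      have h2 : β (2*j+1) ≤ β (2*i+1) := hmono _ _ (by omega) (by omega)
      simp only [hm]; linarith
    set L' : List ℚ := pl m (u+1) with hL'
    have hpairβ : ∀ r : ℕ, 2 * ∑ i ∈ range r, m i = ∑ j ∈ range (2*r), β j := by
      intro r
      rw [← sum_pair β r, Finset.mul_sum]
      refine Finset.sum_congr rfl (fun i _ => ?_)
      simp only [hm]; ring
    have hsorted : L'.Pairwise (· ≥ ·) := by
      rw [hL']; exact pl_sorted m (u+1) hmL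
    have hlen : L'.length = v + 2 := by
      rw [hL']; simp [pl_length]; omega
    have hfil : Finset.filter (fun j => (j+1) % 2 = v % 2) (Finset.range (v-1))
        = Finset.image (fun i => 2*i+1) (Finset.range (u-1)) := by
      ext j
      simp only [Finset.mem_filter, Finset.mem_range, Finset.mem_image]
      constructor
      · rintro ⟨h1, h2⟩; exact ⟨j/2, by omega, by omega⟩
      · rintro ⟨i, hi, rfl⟩; omega
    have hO'coe : (↑L' : Multiset ℚ) = O' := by
      rw [hO'def, hL']
      rw [if_pos (by omega)]
      have hbind : ((Finset.range (v - 1)).filter (fun j => (j + 1) % 2 = v % 2)).val.bind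
          (fun j => Multiset.replicate 2 (((α j : ℚ) + (α (j + 1) : ℚ)) / 2))
          = ∑ i ∈ range (u-1), Multiset.replicate 2 (m (i+1)) := by
        have : ((Finset.range (v - 1)).filter (fun j => (j + 1) % 2 = v % 2)).val.bind
            (fun j => Multiset.replicate 2 (((α j : ℚ) + (α (j + 1) : ℚ)) / 2))
            = ∑ j ∈ (Finset.range (v - 1)).filter (fun j => (j + 1) % 2 = v % 2),
                Multiset.replicate 2 (((α j : ℚ) + (α (j + 1) : ℚ)) / 2) := rfl
        rw [this, hfil, Finset.sum_image (by intro x _ y _ h; beta_reduce at h; omega)]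
        refine Finset.sum_congr rfl (fun i hi => ?_)
        rw [Finset.mem_range] at hi
        have e1 : β (2*i+2) = ((α (2*i+1) : ℤ) : ℚ) := by
          rw [hβmid (2*i+2) (by omega) (by omega)]; norm_num
        have e2 : β (2*i+3) = ((α (2*i+1+1) : ℤ) : ℚ) := by
          rw [hβmid (2*i+3) (by omega) (by omega)]; norm_num
        simp only [hm]
        have e3 : 2*(i+1) = 2*i+2 := by omega
        have e4 : 2*(i+1)+1 = 2*i+3 := by omega
        rw [e4, e3, e1, e2]
      rw [hbind]
      have hc1 : ((a : ℚ) - b + 1 + (α (v - 1) : ℚ)) / 2 = m u := by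
        simp only [hm]
        have e1 : β (2*u) = ((α (v-1) : ℤ) : ℚ) := by
          rw [← hu2, hβmid v (by omega) le_rfl]
        have e2 : 2*u+1 = v+1 := by omega
        rw [e1, e2, hβlast]
        ring
      have hc2 : ((a : ℚ) + b - 1 + (α 0 : ℚ)) / 2 = m 0 := by
        simp only [hm]
        have e1 : β (2*0) = β 0 := by norm_num
        have e2 : β (2*0+1) = ((α 0 : ℤ) : ℚ) := by
          rw [hβmid (2*0+1) (by omega) (by omega)]
        rw [e1, e2, hβ0]
      rw [hc1, hc2, pl_coe]
      have hdecomp : ∑ i ∈ range (u+1), Multiset.replicate 2 (m i)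
          = Multiset.replicate 2 (m 0) + (∑ i ∈ range (u-1), Multiset.replicate 2 (m (i+1))
            + Multiset.replicate 2 (m u)) := by
        rw [Finset.sum_range_succ' (fun i => Multiset.replicate 2 (m i)) u]
        have h9 : ∑ i ∈ range u, Multiset.replicate 2 (m (i+1))
            = ∑ i ∈ range (u-1), Multiset.replicate 2 (m (i+1))
              + Multiset.replicate 2 (m u) := by
          have e : u = (u-1)+1 := by omega
          rw [e, Finset.sum_range_succ]
          have e2 : u - 1 + 1 = u := by omega
          rw [e2]
        rw [h9]
        abel
      rw [hdecomp]
      abel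
    have htake : ∀ s, s ≤ v → (L'.take (s+1)).sum
        = if (s+1) % 2 = v % 2 then ∑ j ∈ range (s+1), β j
          else (∑ j ∈ range s, β j) + (β s + β (s+1))/2 := by
      intro s hs
      rw [hL', pl_take_sum m (u+1) (s+1) (by omega)]
      rcases Nat.even_or_odd s with ⟨r, hr⟩ | ⟨r, hr⟩
      · -- s even
        rw [if_neg (by omega)]
        have e1 : (s+1)/2 = r := by omega
        have e2 : ((s+1) % 2 : ℕ) = 1 := by omega
        rw [e1, e2, hpairβ r]
        have e3 : 2*r = s := by omega
        have e6 : m r = (β s + β (s+1))/2 := by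
          simp only [hm]
          have e4 : 2*r = s := by omega
          have e5 : 2*r+1 = s+1 := by omega
          rw [e5, e4]
        rw [e3, e6]
        push_cast
        ring
      · -- s odd
        rw [if_pos (by omega)]
        have e1 : (s+1)/2 = r+1 := by omega
        have e2 : ((s+1) % 2 : ℕ) = 0 := by omega
        rw [e1, e2, hpairβ (r+1)]
        have e3 : 2*(r+1) = s+1 := by omega
        rw [e3]
        push_cast
        ring
    have hsum : L'.sum = O.sum := by
      have hOs : O.sum = 2*(a:ℚ) + ∑ j ∈ range v, β (j+1) := by
        have := hOmap id
        simpa using this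
      rw [hL', pl_sum, hpairβ (u+1), hOs]
      have e1 : 2*(u+1) = (v+1)+1 := by omega
      rw [e1, Finset.sum_range_succ]
      have e2 : ∑ j ∈ range (v+1), β j = β 0 + ∑ j ∈ range v, β (j+1) := by
        have := sum_shift β v
        linarith
      rw [e2, ← h2a]
      ring
    exact assemble (a:ℚ) v β O O' L' hmono h2a hO'coe hsorted hlen hsum htake hOcard hOmap
  · -- v odd : v = 2*u+1
    set m : ℕ → ℚ := fun i => (β (2*i+1) + β (2*i+2))/2 with hm
    have hmL : ∀ i j, i ≤ j → j < u+1 → m j ≤ m i := by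
      intro i j hij hj
      have h1 : β (2*j+1) ≤ β (2*i+1) := hmono _ _ (by omega) (by omega)
      have h2 : β (2*j+2) ≤ β (2*i+2) := hmono _ _ (by omega) (by omega)
      simp only [hm]; linarith
    set L' : List ℚ := β 0 :: pl m (u+1) with hL'
    have hpairβ : ∀ r : ℕ, 2 * ∑ i ∈ range r, m i = ∑ j ∈ range (2*r), β (j+1) := by
      intro r
      rw [← sum_pair (fun j => β (j+1)) r, Finset.mul_sum]
      refine Finset.sum_congr rfl (fun i _ => ?_)
      simp only [hm]
      have e1 : 2*i+1+1 = 2*i+2 := by omega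
      rw [e1]; ring
    have hsorted : L'.Pairwise (· ≥ ·) := by
      rw [hL', List.pairwise_cons]
      constructor
      · intro x hx
        obtain ⟨i, hi, rfl⟩ := pl_mem m (u+1) x hx
        have h1 : β (2*i+1) ≤ β 0 := hmono _ _ (by omega) (by omega)
        have h2 : β (2*i+2) ≤ β 0 := hmono _ _ (by omega) (by omega)
        simp only [hm]; linarith
      · exact pl_sorted m (u+1) hmL
    have hlen : L'.length = v + 2 := by
      rw [hL']; simp [pl_length]; omega
    have hfil : Finset.filter (fun j => (j+1) % 2 = v % 2) (Finset.range (v-1))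
        = Finset.image (fun i => 2*i) (Finset.range u) := by
      ext j
      simp only [Finset.mem_filter, Finset.mem_range, Finset.mem_image]
      constructor
      · rintro ⟨h1, h2⟩; exact ⟨j/2, by omega, by omega⟩
      · rintro ⟨i, hi, rfl⟩; omega
    have hO'coe : (↑L' : Multiset ℚ) = O' := by
      rw [hO'def, hL']
      rw [if_neg (by omega)]
      have hbind : ((Finset.range (v - 1)).filter (fun j => (j + 1) % 2 = v % 2)).val.bind
          (fun j => Multiset.replicate 2 (((α j : ℚ) + (α (j + 1) : ℚ)) / 2))
          = ∑ i ∈ range u, Multiset.replicate 2 (m i) := by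
        have : ((Finset.range (v - 1)).filter (fun j => (j + 1) % 2 = v % 2)).val.bind
            (fun j => Multiset.replicate 2 (((α j : ℚ) + (α (j + 1) : ℚ)) / 2))
            = ∑ j ∈ (Finset.range (v - 1)).filter (fun j => (j + 1) % 2 = v % 2),
                Multiset.replicate 2 (((α j : ℚ) + (α (j + 1) : ℚ)) / 2) := rfl
        rw [this, hfil, Finset.sum_image (by intro x _ y _ h; beta_reduce at h; omega)]
        refine Finset.sum_congr rfl (fun i hi => ?_)
        rw [Finset.mem_range] at hi
        have e1 : β (2*i+1) = ((α (2*i) : ℤ) : ℚ) := by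
          rw [hβmid (2*i+1) (by omega) (by omega)]; norm_num
        have e2 : β (2*i+2) = ((α (2*i+1) : ℤ) : ℚ) := by
          rw [hβmid (2*i+2) (by omega) (by omega)]; norm_num
        simp only [hm]
        rw [e1, e2]
      rw [hbind]
      have hc1 : ((a : ℚ) - b + 1 + (α (v - 1) : ℚ)) / 2 = m u := by
        simp only [hm]
        have e1 : β (2*u+1) = ((α (2*u) : ℤ) : ℚ) := by
          rw [hβmid (2*u+1) (by omega) (by omega)]; norm_num
        have e2 : 2*u+2 = v+1 := by omega
        have e3 : v - 1 = 2*u := by omega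
        rw [e1, e2, hβlast, e3]
        ring
      have hc2 : ({(a : ℚ) + b - 1} : Multiset ℚ) = {β 0} := by rw [hβ0]
      rw [hc1, hc2]
      have hcons : ((β 0 :: pl m (u+1) : List ℚ) : Multiset ℚ)
          = {β 0} + (pl m (u+1) : Multiset ℚ) := by
        rw [Multiset.singleton_add]; rfl
      rw [hcons, pl_coe, Finset.sum_range_succ]
      abel
    have htake : ∀ s, s ≤ v → (L'.take (s+1)).sum
        = if (s+1) % 2 = v % 2 then ∑ j ∈ range (s+1), β j
          else (∑ j ∈ range s, β j) + (β s + β (s+1))/2 := by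
      intro s hs
      rw [hL']
      have hts : (List.take (s+1) (β 0 :: pl m (u+1))).sum
          = β 0 + (List.take s (pl m (u+1))).sum := by
        rw [List.take_succ_cons, List.sum_cons]
      rw [hts, pl_take_sum m (u+1) s (by omega)]
      rcases Nat.even_or_odd s with ⟨r, hr⟩ | ⟨r, hr⟩
      · -- s even = r + r
        have hs2 : s = 2*r := by omega
        rw [if_pos (by omega)]
        have e1 : s/2 = r := by omega
        have e2 : (s % 2 : ℕ) = 0 := by omega
        rw [e1, e2, hpairβ r]
        have e3 : 2*r = s := by omega
        rw [e3, sum_shift β s]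
        push_cast
        ring
      · -- s odd = 2r+1
        rw [if_neg (by omega)]
        have e1 : s/2 = r := by omega
        have e2 : (s % 2 : ℕ) = 1 := by omega
        rw [e1, e2, hpairβ r]
        have e4 : ∑ j ∈ range (2*r), β (j+1) = (∑ j ∈ range (2*r+1), β j) - β 0 :=
          sum_shift β (2*r)
        have e5 : 2*r+1 = s := by omega
        rw [e4, e5]
        have e6 : m r = (β s + β (s+1))/2 := by
          simp only [hm]
          have : 2*r+1 = s := by omega
          rw [this]
          have : 2*r+2 = s+1 := by omega
          rw [this]
        rw [e6]
        push_cast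
        ring
    have hsum : L'.sum = O.sum := by
      have hOs : O.sum = 2*(a:ℚ) + ∑ j ∈ range v, β (j+1) := by
        have := hOmap id
        simpa using this
      rw [hL', List.sum_cons, pl_sum, hpairβ (u+1), hOs]
      have e1 : 2*(u+1) = v+1 := by omega
      rw [e1, Finset.sum_range_succ]
      have e2 : v + 1 - 1 + 1 = v + 1 := by omega
      rw [← h2a]
      ring
    exact assemble (a:ℚ) v β O O' L' hmono h2a hO'coe hsorted hlen hsum htake hOcard hOmap
end

section
/- Let a, b be positive integers with b > a, let v ≥ 1, and let a_1 > a_2 > ... > a_v be integers of the same parity as a+b-1 with b - a - 1 ≤ a_v and a_1 < a + b - 1. Define the partition O' whose parts are: two copies of (a_v - (b - a - 1))/2 (this part being omitted if a_v = b - a - 1); two copies of (a_j + a_{j+1})/2 for each j ∈ [1, v-1] with j ≡ v (mod 2); together with two copies of (a + b - 1 + a_1)/2 if v is even, or one copy of a + b - 1 if v is odd. Define the partition O whose parts are two copies of a together with a_1, ..., a_v. Then O' and O have the same total sum and O' dominates O. -/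
/- ## Auxiliary machinery -/

private def fmax (s : Multiset ℚ) (x : ℚ) : ℚ := (s.map (fun p => max (p - x) 0)).sum

private lemma fmax_eq_list (s : Multiset ℚ) (x : ℚ) :
    fmax s x = (((s.sort (· ≤ ·)).reverse).map (fun p => max (p - x) 0)).sum := by
  rw [List.map_reverse, List.sum_reverse]
  rw [fmax]
  conv_lhs => rw [← Multiset.sort_eq (s := s) (r := (· ≤ ·))]
  rw [Multiset.map_coe, Multiset.sum_coe]

private lemma list_sum_le (l : List ℚ) (x : ℚ) :
    l.sum ≤ l.length * x + (l.map (fun p => max (p - x) 0)).sum := by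
  induction l with
  | nil => simp
  | cons p l ih =>
    simp only [List.sum_cons, List.length_cons, List.map_cons]
    have h : p ≤ x + max (p - x) 0 := by
      have := le_max_left (p - x) (0 : ℚ); linarith
    push_cast
    linarith

private lemma sum_map_sub (l : List ℚ) (x : ℚ) :
    (l.map (fun p => p - x)).sum = l.sum - l.length * x := by
  induction l with
  | nil => simp
  | cons p l ih => simp [ih]; push_cast; ring

private lemma topA (s : Multiset ℚ) (t : ℕ) (x : ℚ) (hx : 0 ≤ x) :
    ((s.sort (· ≤ ·)).reverse.take t).sum ≤ t * x + fmax s x := by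
  set l := (s.sort (· ≤ ·)).reverse with hl
  rw [fmax_eq_list, ← hl]
  have h1 := list_sum_le (l.take t) x
  have h2 : ((l.take t).length : ℚ) * x ≤ t * x := by
    apply mul_le_mul_of_nonneg_right _ hx
    exact_mod_cast Nat.le_of_lt_succ (Nat.lt_succ_of_le (by simp [List.length_take]))
  have h3 : ((l.take t).map (fun p => max (p - x) 0)).sum ≤
      (l.map (fun p => max (p - x) 0)).sum := by
    conv_rhs => rw [← List.take_append_drop t l]
    rw [List.map_append, List.sum_append]
    have : 0 ≤ ((l.drop t).map (fun p => max (p - x) 0)).sum := by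
      apply List.sum_nonneg
      intro y hy
      simp only [List.mem_map] at hy
      obtain ⟨p, _, rfl⟩ := hy
      exact le_max_right _ _
    linarith
  linarith

private lemma topB (s : Multiset ℚ) (t : ℕ) (ht1 : 1 ≤ t)
    (ht : t ≤ (s.sort (· ≤ ·)).reverse.length) :
    ∃ x : ℚ, x ∈ s ∧ t * x + fmax s x ≤ ((s.sort (· ≤ ·)).reverse.take t).sum := by
  set l := (s.sort (· ≤ ·)).reverse with hl
  have hsort : List.Pairwise (fun p q : ℚ => q ≤ p) l := by
    rw [hl, List.pairwise_reverse]
    exact Multiset.pairwise_sort (s := s) (r := (· ≤ ·))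
  have hidx : t - 1 < l.length := by omega
  set x := l[t - 1] with hx
  refine ⟨x, ?_, ?_⟩
  · have : x ∈ l := List.getElem_mem _
    rw [hl, List.mem_reverse, Multiset.mem_sort] at this
    exact this
  · have hpair := List.pairwise_iff_getElem.mp hsort
    have hM1 : ∀ p ∈ l.take t, x ≤ p := by
      intro p hp
      rw [List.mem_iff_getElem] at hp
      obtain ⟨i, hi, rfl⟩ := hp
      have hi' : i < t := by
        have := hi; rw [List.length_take] at this; omega
      have hil : i < l.length := by
        have := hi; rw [List.length_take] at this; omega
      rw [List.getElem_take]
      rcases eq_or_lt_of_le (Nat.le_sub_one_of_lt hi') with h | h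
      · subst h; exact le_refl _
      · exact hpair i (t - 1) hil hidx h
    have hM2 : ∀ p ∈ l.drop t, p ≤ x := by
      intro p hp
      rw [List.mem_iff_getElem] at hp
      obtain ⟨i, hi, rfl⟩ := hp
      rw [List.getElem_drop]
      exact hpair (t - 1) (t + i) hidx (by rw [List.length_drop] at hi; omega) (by omega)
    have hlen : (l.take t).length = t := by rw [List.length_take]; omega
    rw [fmax_eq_list, ← hl]
    conv_lhs => rw [← List.take_append_drop t l]
    rw [List.map_append, List.sum_append]
    have e1 : ((l.take t).map (fun p => max (p - x) 0)).sum = (l.take t).sum - t * x := by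
      rw [List.map_congr_left (g := fun p => p - x) (fun p hp => max_eq_left (by
        have := hM1 p hp; linarith))]
      rw [sum_map_sub, hlen]
    have e2 : ((l.drop t).map (fun p => max (p - x) 0)).sum = 0 := by
      apply List.sum_eq_zero
      intro y hy
      simp only [List.mem_map] at hy
      obtain ⟨p, hp, rfl⟩ := hy
      exact max_eq_right (by have := hM2 p hp; linarith)
    rw [e1, e2]
    linarith

/- ## The piecewise-linear inequalities -/

private lemma step_ineq (P q r d x : ℚ) (hd : 0 ≤ d) (h1 : d ≤ r) (h2 : r < q) (h3 : q < P)
    (hx : 0 ≤ x) :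
    max (q - x) 0 + max (r - x) 0 + 2 * max ((P - d) / 2 - x) 0 ≤
      2 * max ((P + q) / 2 - x) 0 + 2 * max ((r - d) / 2 - x) 0 := by
  rcases max_cases (q - x) (0:ℚ) with ⟨e1, f1⟩ | ⟨e1, f1⟩ <;>
  rcases max_cases (r - x) (0:ℚ) with ⟨e2, f2⟩ | ⟨e2, f2⟩ <;>
  rcases max_cases ((P - d) / 2 - x) (0:ℚ) with ⟨e3, f3⟩ | ⟨e3, f3⟩ <;>
  rcases max_cases ((P + q) / 2 - x) (0:ℚ) with ⟨e4, f4⟩ | ⟨e4, f4⟩ <;>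
  rcases max_cases ((r - d) / 2 - x) (0:ℚ) with ⟨e5, f5⟩ | ⟨e5, f5⟩ <;>
  rw [e1, e2, e3, e4, e5] <;> linarith

private lemma base1_ineq (c d b0 x : ℚ) (hd : 0 ≤ d) (hcd : d + 2 ≤ c) (h1 : d ≤ b0)
    (h2 : b0 < c) (hx : 0 ≤ x) :
    2 * max ((c - d) / 2 - x) 0 + max (b0 - x) 0 ≤
      2 * max ((b0 - d) / 2 - x) 0 + max (c - x) 0 := by
  rcases max_cases ((c - d) / 2 - x) (0:ℚ) with ⟨e1, f1⟩ | ⟨e1, f1⟩ <;>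
  rcases max_cases (b0 - x) (0:ℚ) with ⟨e2, f2⟩ | ⟨e2, f2⟩ <;>
  rcases max_cases ((b0 - d) / 2 - x) (0:ℚ) with ⟨e3, f3⟩ | ⟨e3, f3⟩ <;>
  rcases max_cases (c - x) (0:ℚ) with ⟨e4, f4⟩ | ⟨e4, f4⟩ <;>
  rw [e1, e2, e3, e4] <;> linarith

private lemma base2_ineq (c d b0 b1 x : ℚ) (hd : 0 ≤ d) (hcd : d + 2 ≤ c) (h1 : d ≤ b1)
    (h2 : b1 < b0) (h3 : b0 < c) (hx : 0 ≤ x) :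
    2 * max ((c - d) / 2 - x) 0 + max (b0 - x) 0 + max (b1 - x) 0 ≤
      2 * max ((b1 - d) / 2 - x) 0 + 2 * max ((c + b0) / 2 - x) 0 := by
  rcases max_cases ((c - d) / 2 - x) (0:ℚ) with ⟨e1, f1⟩ | ⟨e1, f1⟩ <;>
  rcases max_cases (b0 - x) (0:ℚ) with ⟨e2, f2⟩ | ⟨e2, f2⟩ <;>
  rcases max_cases (b1 - x) (0:ℚ) with ⟨e3, f3⟩ | ⟨e3, f3⟩ <;>
  rcases max_cases ((b1 - d) / 2 - x) (0:ℚ) with ⟨e4, f4⟩ | ⟨e4, f4⟩ <;>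
  rcases max_cases ((c + b0) / 2 - x) (0:ℚ) with ⟨e5, f5⟩ | ⟨e5, f5⟩ <;>
  rw [e1, e2, e3, e4, e5] <;> linarith

/- ## The main combinatorial induction, at the level of formulas -/

private lemma KIf (c d : ℚ) (hd : 0 ≤ d) (hcd : d + 2 ≤ c) :
    ∀ v : ℕ, 1 ≤ v → ∀ β : ℕ → ℚ, d ≤ β (v - 1) → β 0 < c →
    (∀ i j, i < j → j < v → β j < β i) →
    ((β (v - 1) - d)
        + (∑ j ∈ Finset.range (v - 1), if (j + 1) % 2 = v % 2 then β j + β (j + 1) else 0)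
        + (if v % 2 = 0 then c + β 0 else c)
      = 2 * ((c - d) / 2) + ∑ j ∈ Finset.range v, β j)
    ∧ ∀ x : ℚ, 0 ≤ x →
      2 * max ((c - d) / 2 - x) 0 + ∑ j ∈ Finset.range v, max (β j - x) 0 ≤
        2 * max ((β (v - 1) - d) / 2 - x) 0
        + (∑ j ∈ Finset.range (v - 1),
            if (j + 1) % 2 = v % 2 then 2 * max ((β j + β (j + 1)) / 2 - x) 0 else 0)
        + (if v % 2 = 0 then 2 * max ((c + β 0) / 2 - x) 0 else max (c - x) 0) := by
  intro v
  induction v using Nat.strong_induction_on with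
  | _ v ih =>
    intro hv β hlow hhigh hdec
    match v, hv with
    | 1, _ =>
      constructor
      · simp [Finset.sum_range_one]; ring
      · intro x hx
        simpa [Finset.sum_range_one] using base1_ineq c d (β 0) x hd hcd hlow hhigh hx
    | 2, _ =>
      have hd1 : d ≤ β 1 := hlow
      have hd0 : β 1 < β 0 := hdec 0 1 (by omega) (by omega)
      constructor
      · simp [Finset.sum_range_succ, Finset.sum_range_one]; ring
      · intro x hx
        have := base2_ineq c d (β 0) (β 1) x hd hcd hd1 hd0 hhigh hx
        simp only [Finset.sum_range_succ, Finset.sum_range_one, Finset.sum_range_zero]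
        norm_num
        linarith
    | (n+3), _ =>
      have hlow' : d ≤ β (n + 1 - 1) := by
        simpa using le_of_lt (lt_of_le_of_lt hlow (hdec n (n+2) (by omega) (by omega)))
      have hdec' : ∀ i j, i < j → j < n + 1 → β j < β i :=
        fun i j hij hj => hdec i j hij (by omega)
      obtain ⟨ihsum, ihle⟩ := ih (n+1) (by omega) (by omega) β hlow' hhigh hdec'
      have hmod : (n + 3) % 2 = (n + 1) % 2 := by omega
      have hc1 : (n + 1) % 2 = (n + 1) % 2 := rfl
      have hc2 : ¬((n + 2) % 2 = (n + 1) % 2) := by omega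
      have hP : β (n+2) < β (n+1) := hdec (n+1) (n+2) (by omega) (by omega)
      have hQ : β (n+1) < β n := hdec n (n+1) (by omega) (by omega)
      have hR : d ≤ β (n+2) := hlow
      have e1s : ∑ j ∈ Finset.range (n+3), β j
          = (∑ j ∈ Finset.range (n+1), β j) + β (n+1) + β (n+2) := by
        rw [show n+3 = (n+2)+1 from rfl, Finset.sum_range_succ, Finset.sum_range_succ]
      have e2s : (∑ j ∈ Finset.range (n+3-1), if (j+1) % 2 = (n+3) % 2 then β j + β (j+1) else 0)
          = (∑ j ∈ Finset.range n, if (j+1) % 2 = (n+1) % 2 then β j + β (j+1) else 0)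
            + (β n + β (n+1)) := by
        rw [show n+3-1 = (n+1)+1 from rfl, Finset.sum_range_succ, Finset.sum_range_succ,
          if_pos (by omega : (n+1) % 2 = (n+3) % 2), if_neg (by omega : ¬((n+2) % 2 = (n+3) % 2))]
        simp only [hmod, show n+1-1 = n from rfl]
        ring
      have ehead : (if (n+3) % 2 = 0 then c + β 0 else c)
          = (if (n+1) % 2 = 0 then c + β 0 else c) := by
        rw [hmod]
      constructor
      · rw [e1s, e2s, ehead, show n+3-1 = n+2 from rfl]
        rw [show n+1-1 = n from rfl] at ihsum
        linarith [ihsum]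
      · intro x hx
        have hstep := step_ineq (β n) (β (n+1)) (β (n+2)) d x hd hR hP hQ hx
        have hih := ihle x hx
        rw [show n+1-1 = n from rfl] at hih
        have e1 : ∑ j ∈ Finset.range (n+3), max (β j - x) 0
            = (∑ j ∈ Finset.range (n+1), max (β j - x) 0)
              + max (β (n+1) - x) 0 + max (β (n+2) - x) 0 := by
          rw [show n+3 = (n+2)+1 from rfl, Finset.sum_range_succ, Finset.sum_range_succ]
        have e2 : (∑ j ∈ Finset.range (n+3-1),
              if (j+1) % 2 = (n+3) % 2 then 2 * max ((β j + β (j+1)) / 2 - x) 0 else 0)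
            = (∑ j ∈ Finset.range n,
                if (j+1) % 2 = (n+1) % 2 then 2 * max ((β j + β (j+1)) / 2 - x) 0 else 0)
              + 2 * max ((β n + β (n+1)) / 2 - x) 0 := by
          rw [show n+3-1 = (n+1)+1 from rfl, Finset.sum_range_succ, Finset.sum_range_succ,
            if_pos (by omega : (n+1) % 2 = (n+3) % 2), if_neg (by omega : ¬((n+2) % 2 = (n+3) % 2))]
          simp only [hmod]
          ring
        have ehead2 : (if (n+3) % 2 = 0 then 2 * max ((c + β 0) / 2 - x) 0 else max (c - x) 0)
            = (if (n+1) % 2 = 0 then 2 * max ((c + β 0) / 2 - x) 0 else max (c - x) 0) := by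
          rw [hmod]
        rw [e1, e2, ehead2, show n+3-1 = n+2 from rfl]
        linarith [hih, hstep]

/- ## Computation helpers for `fmax` and sums of the explicit multisets -/

private lemma fmax_add (s t : Multiset ℚ) (x : ℚ) : fmax (s + t) x = fmax s x + fmax t x := by
  simp [fmax]

private lemma fmax_replicate (n : ℕ) (p x : ℚ) :
    fmax (Multiset.replicate n p) x = n * max (p - x) 0 := by
  simp [fmax, Multiset.map_replicate, Multiset.sum_replicate, nsmul_eq_mul]

private lemma fmax_singleton (p x : ℚ) : fmax {p} x = max (p - x) 0 := by
  simp [fmax]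

private lemma fmax_zero' (x : ℚ) : fmax 0 x = 0 := by simp [fmax]

private lemma fmax_bind (F : Finset ℕ) (f : ℕ → Multiset ℚ) (x : ℚ) :
    fmax (F.val.bind f) x = ∑ j ∈ F, fmax (f j) x := by
  rw [fmax, Multiset.map_bind, Multiset.sum_bind]
  rfl

private lemma msum_bind (F : Finset ℕ) (f : ℕ → Multiset ℚ) :
    (F.val.bind f).sum = ∑ j ∈ F, (f j).sum := by
  rw [Multiset.sum_bind]; rfl

private lemma msum_map (v : ℕ) (g : ℕ → ℚ) :
    ((Finset.range v).val.map g).sum = ∑ j ∈ Finset.range v, g j := rfl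

private lemma fmax_map (v : ℕ) (g : ℕ → ℚ) (x : ℚ) :
    fmax ((Finset.range v).val.map g) x = ∑ j ∈ Finset.range v, max (g j - x) 0 := by
  rw [fmax, Multiset.map_map]; rfl

/-- Orbit-closure lemma for negative blocks (third lemma of "Une remarque sur les
orbites unipotentes", case `a < b`): the partition `O'` with parts two copies of
`(a_v - (b-a-1))/2` (omitted when `a_v = b-a-1`), two copies of `(a_j + a_{j+1})/2`
for `j ≡ v (mod 2)`, `1 ≤ j < v`, plus two copies of `(a+b-1+a_1)/2` (v even) or
one copy of `a+b-1` (v odd), has the same total as, and dominates, the partition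
`O` with parts two copies of `a` together with the `a_j`. Here `a_1 > ... > a_v`
are integers of the parity of `a+b-1` with `b-a-1 ≤ a_v` and `a_1 < a+b-1`,
encoded as `α (j-1) = a_j`. -/
theorem stmt_10 (a b v : ℕ) (ha : 0 < a) (hab : a < b) (hv : 1 ≤ v) (α : ℕ → ℤ)
    (hlow : (b : ℤ) - a - 1 ≤ α (v - 1)) (hhigh : α 0 < (a : ℤ) + b - 1)
    (hpar : ∀ j < v, α j % 2 = ((a : ℤ) + b - 1) % 2)
    (hdec : ∀ i j, i < j → j < v → α j < α i) :
    let O' : Multiset ℚ :=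
      (if α (v - 1) = (b : ℤ) - a - 1 then 0
       else Multiset.replicate 2 (((α (v - 1) : ℚ) - ((b : ℚ) - a - 1)) / 2))
      + ((Finset.range (v - 1)).filter (fun j => (j + 1) % 2 = v % 2)).val.bind
          (fun j => Multiset.replicate 2 (((α j : ℚ) + (α (j + 1) : ℚ)) / 2))
      + (if v % 2 = 0 then Multiset.replicate 2 (((a : ℚ) + b - 1 + (α 0 : ℚ)) / 2)
         else {(a : ℚ) + b - 1})
    let O : Multiset ℚ :=
      Multiset.replicate 2 (a : ℚ) + (Finset.range v).val.map (fun j => (α j : ℚ))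
    O'.sum = O.sum ∧
      ∀ t : ℕ, ((O.sort (· ≤ ·)).reverse.take t).sum ≤ ((O'.sort (· ≤ ·)).reverse.take t).sum := by
  intro O' O
  have hd : (0:ℚ) ≤ (b:ℚ) - a - 1 := by
    have : (a:ℚ) + 1 ≤ b := by exact_mod_cast hab
    linarith
  have hcd : ((b:ℚ) - a - 1) + 2 ≤ (a:ℚ) + b - 1 := by
    have : (1:ℚ) ≤ a := by exact_mod_cast ha
    linarith
  have hlowq : ((b:ℚ) - a - 1) ≤ (α (v-1) : ℚ) := by exact_mod_cast hlow
  have hhighq : (α 0 : ℚ) < (a:ℚ) + b - 1 := by exact_mod_cast hhigh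
  have hdecq : ∀ i j, i < j → j < v → ((α j : ℚ)) < (α i : ℚ) := by
    intro i j hij hj; exact_mod_cast hdec i j hij hj
  obtain ⟨hsum, hineq⟩ := KIf ((a:ℚ) + b - 1) ((b:ℚ) - a - 1) hd hcd v hv
    (fun j => (α j : ℚ)) hlowq hhighq hdecq
  simp only [show ((a:ℚ) + b - 1 - ((b:ℚ) - a - 1)) / 2 = (a:ℚ) from by ring] at hsum hineq
  -- elementwise lower bound
  have hge : ∀ j, j < v → ((b:ℚ) - a - 1) ≤ (α j : ℚ) := by
    intro j hj
    rcases eq_or_lt_of_le (Nat.le_sub_one_of_lt hj) with h | h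
    · rw [h]; exact hlowq
    · exact le_of_lt (lt_of_le_of_lt hlowq (hdecq j (v-1) h (by omega)))
  -- fmax formulas
  have hOfm : ∀ x : ℚ, fmax O x
      = 2 * max ((a:ℚ) - x) 0 + ∑ j ∈ Finset.range v, max ((α j : ℚ) - x) 0 := by
    intro x
    show fmax (Multiset.replicate 2 (a : ℚ)
      + (Finset.range v).val.map (fun j => (α j : ℚ))) x = _
    rw [fmax_add, fmax_replicate, fmax_map]
    norm_num
  have hO'fm : ∀ x : ℚ, 0 ≤ x → fmax O' x
      = 2 * max (((α (v-1) : ℚ) - ((b:ℚ) - a - 1)) / 2 - x) 0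
        + (∑ j ∈ Finset.range (v - 1),
            if (j + 1) % 2 = v % 2
            then 2 * max (((α j : ℚ) + (α (j+1) : ℚ)) / 2 - x) 0 else 0)
        + (if v % 2 = 0 then 2 * max (((a:ℚ) + b - 1 + (α 0 : ℚ)) / 2 - x) 0
           else max ((a:ℚ) + b - 1 - x) 0) := by
    intro x hx
    show fmax ((if α (v - 1) = (b : ℤ) - a - 1 then 0
       else Multiset.replicate 2 (((α (v - 1) : ℚ) - ((b : ℚ) - a - 1)) / 2))
      + ((Finset.range (v - 1)).filter (fun j => (j + 1) % 2 = v % 2)).val.bind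
          (fun j => Multiset.replicate 2 (((α j : ℚ) + (α (j + 1) : ℚ)) / 2))
      + (if v % 2 = 0 then Multiset.replicate 2 (((a : ℚ) + b - 1 + (α 0 : ℚ)) / 2)
         else {(a : ℚ) + b - 1})) x = _
    rw [fmax_add, fmax_add, fmax_bind]
    congr 1
    · congr 1
      · -- tail
        split_ifs with h
        · rw [fmax_zero']
          have hc : (α (v-1) : ℚ) = (b:ℚ) - a - 1 := by
            have := congrArg (fun z : ℤ => (z : ℚ)) h
            push_cast at this
            exact this
          rw [hc]
          rw [show (((b:ℚ) - a - 1) - ((b:ℚ) - a - 1)) / 2 - x = -x from by ring]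
          rw [max_eq_right (by linarith)]
          ring
        · rw [fmax_replicate]; norm_num
      · -- middle
        rw [Finset.sum_filter]
        apply Finset.sum_congr rfl
        intro j _
        split_ifs
        · rw [fmax_replicate]; norm_num
        · rfl
    · -- head
      split_ifs
      · rw [fmax_replicate]; norm_num
      · rw [fmax_singleton]
  -- sum formulas
  have hOsum : O.sum = 2 * (a:ℚ) + ∑ j ∈ Finset.range v, (α j : ℚ) := by
    show (Multiset.replicate 2 (a : ℚ)
      + (Finset.range v).val.map (fun j => (α j : ℚ))).sum = _
    rw [Multiset.sum_add, Multiset.sum_replicate, msum_map, two_smul]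
    ring
  have hO'sum : O'.sum = ((α (v-1) : ℚ) - ((b:ℚ) - a - 1))
      + (∑ j ∈ Finset.range (v - 1),
          if (j + 1) % 2 = v % 2 then (α j : ℚ) + (α (j+1) : ℚ) else 0)
      + (if v % 2 = 0 then (a:ℚ) + b - 1 + (α 0 : ℚ) else (a:ℚ) + b - 1) := by
    show ((if α (v - 1) = (b : ℤ) - a - 1 then 0
       else Multiset.replicate 2 (((α (v - 1) : ℚ) - ((b : ℚ) - a - 1)) / 2))
      + ((Finset.range (v - 1)).filter (fun j => (j + 1) % 2 = v % 2)).val.bind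
          (fun j => Multiset.replicate 2 (((α j : ℚ) + (α (j + 1) : ℚ)) / 2))
      + (if v % 2 = 0 then Multiset.replicate 2 (((a : ℚ) + b - 1 + (α 0 : ℚ)) / 2)
         else {(a : ℚ) + b - 1})).sum = _
    rw [Multiset.sum_add, Multiset.sum_add, msum_bind]
    congr 1
    · congr 1
      · split_ifs with h
        · have hc : (α (v-1) : ℚ) = (b:ℚ) - a - 1 := by
            have := congrArg (fun z : ℤ => (z : ℚ)) h
            push_cast at this
            exact this
          rw [hc]
          simp
        · rw [Multiset.sum_replicate, two_smul]; ring
      · rw [Finset.sum_filter]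
        apply Finset.sum_congr rfl
        intro j _
        split_ifs
        · rw [Multiset.sum_replicate, two_smul]; ring
        · rfl
    · split_ifs
      · rw [Multiset.sum_replicate, two_smul]; ring
      · rw [Multiset.sum_singleton]
  have hEqsum : O'.sum = O.sum := by
    rw [hOsum, hO'sum]
    linarith [hsum]
  -- nonnegativity of members
  have hO'nonneg : ∀ p ∈ O', (0:ℚ) ≤ p := by
    intro p hp
    have hp' : p ∈ ((if α (v - 1) = (b : ℤ) - a - 1 then 0
       else Multiset.replicate 2 (((α (v - 1) : ℚ) - ((b : ℚ) - a - 1)) / 2))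
      + ((Finset.range (v - 1)).filter (fun j => (j + 1) % 2 = v % 2)).val.bind
          (fun j => Multiset.replicate 2 (((α j : ℚ) + (α (j + 1) : ℚ)) / 2))
      + (if v % 2 = 0 then Multiset.replicate 2 (((a : ℚ) + b - 1 + (α 0 : ℚ)) / 2)
         else {(a : ℚ) + b - 1})) := hp
    rw [Multiset.mem_add, Multiset.mem_add] at hp'
    rcases hp' with (hp' | hp') | hp'
    · by_cases h : α (v - 1) = (b : ℤ) - a - 1
      · rw [if_pos h] at hp'; simp at hp'
      · rw [if_neg h] at hp'
        rw [Multiset.eq_of_mem_replicate hp']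
        have := hge (v-1) (by omega)
        linarith
    · rw [Multiset.mem_bind] at hp'
      obtain ⟨j, hj, hpj⟩ := hp'
      rw [Finset.mem_val, Finset.mem_filter, Finset.mem_range] at hj
      rw [Multiset.eq_of_mem_replicate hpj]
      have h1 := hge j (by omega)
      have h2 := hge (j+1) (by omega)
      linarith
    · by_cases h : v % 2 = 0
      · rw [if_pos h] at hp'
        rw [Multiset.eq_of_mem_replicate hp']
        have := hge 0 (by omega)
        linarith
      · rw [if_neg h] at hp'
        rw [Multiset.mem_singleton] at hp'
        rw [hp']
        linarith
  have hOnonneg : ∀ p ∈ O, (0:ℚ) ≤ p := by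
    intro p hp
    have hp' : p ∈ (Multiset.replicate 2 (a : ℚ)
      + (Finset.range v).val.map (fun j => (α j : ℚ))) := hp
    rw [Multiset.mem_add] at hp'
    rcases hp' with hp' | hp'
    · rw [Multiset.eq_of_mem_replicate hp']
      positivity
    · rw [Multiset.mem_map] at hp'
      obtain ⟨j, hj, rfl⟩ := hp'
      rw [Finset.mem_val, Finset.mem_range] at hj
      have := hge j hj
      linarith
  have hfm_le : ∀ x : ℚ, 0 ≤ x → fmax O x ≤ fmax O' x := by
    intro x hx
    rw [hOfm x, hO'fm x hx]
    exact hineq x hx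
  refine ⟨hEqsum, ?_⟩
  intro t
  rcases Nat.eq_zero_or_pos t with rfl | ht1
  · simp
  rcases le_or_gt t ((O'.sort (· ≤ ·)).reverse.length) with hle | hgt
  · obtain ⟨x, hxmem, hB⟩ := topB O' t ht1 hle
    have hx0 : (0:ℚ) ≤ x := hO'nonneg x hxmem
    have h1 := topA O t x hx0
    have h2 := hfm_le x hx0
    linarith [hB]
  · rw [List.take_of_length_le (le_of_lt hgt)]
    have hs' : ((O'.sort (· ≤ ·)).reverse).sum = O'.sum := by
      rw [List.sum_reverse]
      conv_rhs => rw [← Multiset.sort_eq (s := O') (r := (· ≤ ·))]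
      rw [Multiset.sum_coe]
    have hsO : ((O.sort (· ≤ ·)).reverse).sum = O.sum := by
      rw [List.sum_reverse]
      conv_rhs => rw [← Multiset.sort_eq (s := O) (r := (· ≤ ·))]
      rw [Multiset.sum_coe]
    have hO_take : ((O.sort (· ≤ ·)).reverse.take t).sum
        ≤ ((O.sort (· ≤ ·)).reverse).sum := by
      have hsplit := List.sum_take_add_sum_drop ((O.sort (· ≤ ·)).reverse) t
      have hdropnn : 0 ≤ ((O.sort (· ≤ ·)).reverse.drop t).sum := by
        apply List.sum_nonneg
        intro p hp
        apply hOnonneg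
        have : p ∈ (O.sort (· ≤ ·)).reverse := List.mem_of_mem_drop hp
        rw [List.mem_reverse, Multiset.mem_sort] at this
        exact this
      linarith
    rw [hs']
    rw [hsO] at hO_take
    linarith [hEqsum]
end

section
/- Let t ≥ 1, let (a'_i, b'_i) for i ∈ [1, t] be pairs of positive integers with b'_1 ≥ ... ≥ b'_t > 1, and let (a_α, b_α) for α in a finite index set A be pairs of positive integers. Suppose that for every j ∈ [1, t], the multiset E_{≤j} = ⋃_{i ≤ j} { (a'_i - b'_i)/2, (a'_i - b'_i)/2 - 1, ..., -(a'_i + b'_i)/2 + 1 } admits a decomposition as a disjoint multiset union ⋃_{α ∈ A} D'_α(j), where each D'_α(j) is an initial subsegment (possibly empty) of the decreasing segment { (a_α - b_α)/2, ..., -(a_α + b_α)/2 + 1 } starting at (a_α - b_α)/2. Then for every j ∈ [1, t]: the sum of the (∑_{i ≤ j} a'_i) largest elements of the multiset { b_α with multiplicity a_α : α ∈ A } is at least ∑_{i ≤ j} a'_i b'_i. -/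
private lemma card_finsetSum {ι : Type*} (s : Finset ι) (f : ι → Multiset ℕ) :
    Multiset.card (∑ i ∈ s, f i) = ∑ i ∈ s, Multiset.card (f i) := by
  induction s using Finset.cons_induction with
  | empty => simp
  | cons a s ha ih => simp [Finset.sum_cons, ih]

private lemma sum_finsetSum {ι M : Type*} [AddCommMonoid M] (s : Finset ι)
    (f : ι → Multiset M) : (∑ i ∈ s, f i).sum = ∑ i ∈ s, (f i).sum := by
  induction s using Finset.cons_induction with
  | empty => simp
  | cons a s ha ih => simp [Finset.sum_cons, ih]

private lemma segSum (n : ℕ) (c : ℚ) :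
    ∑ k ∈ Finset.range n, (c - (k : ℚ)) = n * c - n * (n - 1) / 2 := by
  induction n with
  | zero => simp
  | succ n ih => rw [Finset.sum_range_succ, ih]; push_cast; ring

private lemma take_top_sum (l : List ℕ) (hl : l.Pairwise (fun a b => b ≤ a)) :
    ∀ ν : Multiset ℕ, ν ≤ ↑l → ν.sum ≤ (l.take (Multiset.card ν)).sum := by
  induction l with
  | nil =>
    intro ν hν
    have : ν = 0 := Multiset.le_zero.mp (by simpa using hν)
    simp [this]
  | cons a l ih =>
    intro ν hν
    rcases eq_or_ne ν 0 with h0 | h0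
    · simp [h0]
    have hsl := List.pairwise_cons.mp hl
    obtain ⟨x, hx, hxa, herase⟩ :
        ∃ x, x ∈ ν ∧ x ≤ a ∧ ν.erase x ≤ (l : Multiset ℕ) := by
      by_cases ha : a ∈ ν
      · exact ⟨a, ha, le_refl a, by simpa using Multiset.erase_le_erase a hν⟩
      · obtain ⟨x, hx⟩ := Multiset.exists_mem_of_ne_zero h0
        have hνl : ν ≤ (l : Multiset ℕ) :=
          (Multiset.le_cons_of_notMem ha).mp (by simpa using hν)
        have hxl : x ∈ (l : Multiset ℕ) := Multiset.mem_of_le hνl hx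
        exact ⟨x, hx, hsl.1 x (by simpa using hxl),
          le_trans (Multiset.erase_le x ν) hνl⟩
    have hpos : 1 ≤ Multiset.card ν := Multiset.card_pos.mpr h0
    have hcard : Multiset.card ν = Multiset.card (ν.erase x) + 1 := by
      rw [Multiset.card_erase_of_mem hx]
      exact (Nat.succ_pred_eq_of_pos hpos).symm
    rw [hcard, List.take_succ_cons, List.sum_cons]
    have hih := ih hsl.2 (ν.erase x) herase
    have hsum : x + (ν.erase x).sum = ν.sum := Multiset.sum_erase hx
    omega

/-- Main inequality (4) in the proof of Clozel's orbit comparison theorem.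
If for every `j` the multiset `E_{≤j}`, the union over `i ≤ j` of the decreasing
segments of length `a'_i` starting at `(a'_i - b'_i)/2`, decomposes as a disjoint
union over `α` of initial subsegments of the decreasing segments of length `aα α`
starting at `((aα α) - (bα α))/2`, then for every `j` the sum of the
`∑_{i ≤ j} a'_i` largest elements of the multiset `{bα α with multiplicity aα α}`
is at least `∑_{i ≤ j} a'_i b'_i`. -/
theorem stmt_17 (t r : ℕ) (ht : 1 ≤ t) (a' b' : Fin t → ℕ)
    (ha' : ∀ i, 1 ≤ a' i) (hb' : ∀ i, 1 < b' i)
    (hb'dec : ∀ i j : Fin t, i ≤ j → b' j ≤ b' i)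
    (aα bα : Fin r → ℕ) (haα : ∀ α, 1 ≤ aα α) (hbα : ∀ α, 1 ≤ bα α)
    (hdecomp : ∀ j : Fin t, ∃ m : Fin r → ℕ, (∀ α, m α ≤ aα α) ∧
      (∑ i ∈ Finset.univ.filter (fun i : Fin t => i ≤ j),
          (Finset.range (a' i)).val.map (fun k => ((a' i : ℚ) - b' i) / 2 - k))
        = ∑ α, (Finset.range (m α)).val.map (fun k => ((aα α : ℚ) - bα α) / 2 - k)) :
    ∀ j : Fin t,
      let μ : Multiset ℕ := ∑ α, Multiset.replicate (aα α) (bα α)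
      (∑ i ∈ Finset.univ.filter (fun i : Fin t => i ≤ j), a' i * b' i)
        ≤ (((μ.sort (· ≤ ·)).reverse.take
            (∑ i ∈ Finset.univ.filter (fun i : Fin t => i ≤ j), a' i)).sum) := by
  intro j μ
  set S := Finset.univ.filter (fun i : Fin t => i ≤ j) with hS
  obtain ⟨m, hm, heq⟩ := hdecomp j
  rw [← hS] at heq
  -- cardinality equality
  have hcard : ∑ i ∈ S, a' i = ∑ α, m α := by
    have := congrArg Multiset.card heq
    simpa [card_finsetSum] using this
  -- sum equality
  have h2 : ∑ i ∈ S, ∑ k ∈ Finset.range (a' i), (((a' i : ℚ) - b' i) / 2 - (k : ℚ))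
      = ∑ α, ∑ k ∈ Finset.range (m α), (((aα α : ℚ) - bα α) / 2 - (k : ℚ)) := by
    have := congrArg Multiset.sum heq
    rw [sum_finsetSum, sum_finsetSum] at this
    simp only [Multiset.bind_singleton, Multiset.map_map, Function.comp,
      Finset.sum_eq_multiset_sum] at this ⊢
    convert this using 2 <;> simp [Multiset.map_map, Function.comp]
  have h2' : ∑ i ∈ S, ((a' i : ℚ) * (((a' i : ℚ) - b' i) / 2) - (a' i : ℚ) * ((a' i : ℚ) - 1) / 2)
      = ∑ α, ((m α : ℚ) * (((aα α : ℚ) - bα α) / 2) - (m α : ℚ) * ((m α : ℚ) - 1) / 2) := by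
    calc ∑ i ∈ S, ((a' i : ℚ) * (((a' i : ℚ) - b' i) / 2) - (a' i : ℚ) * ((a' i : ℚ) - 1) / 2)
        = ∑ i ∈ S, ∑ k ∈ Finset.range (a' i), (((a' i : ℚ) - b' i) / 2 - (k : ℚ)) :=
          Finset.sum_congr rfl fun i _ => (segSum _ _).symm
      _ = ∑ α, ∑ k ∈ Finset.range (m α), (((aα α : ℚ) - bα α) / 2 - (k : ℚ)) := h2
      _ = ∑ α, ((m α : ℚ) * (((aα α : ℚ) - bα α) / 2) - (m α : ℚ) * ((m α : ℚ) - 1) / 2) :=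
          Finset.sum_congr rfl fun α _ => segSum _ _
  have E : ∑ i ∈ S, ((a' i : ℚ) * (1 - b' i))
      = ∑ α, (m α : ℚ) * ((aα α : ℚ) - bα α - m α + 1) := by
    calc ∑ i ∈ S, ((a' i : ℚ) * (1 - b' i))
        = ∑ i ∈ S, 2 * ((a' i : ℚ) * (((a' i : ℚ) - b' i) / 2) - (a' i : ℚ) * ((a' i : ℚ) - 1) / 2) :=
          Finset.sum_congr rfl fun i _ => by ring
      _ = 2 * ∑ i ∈ S, ((a' i : ℚ) * (((a' i : ℚ) - b' i) / 2) - (a' i : ℚ) * ((a' i : ℚ) - 1) / 2) :=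
          (Finset.mul_sum _ _ _).symm
      _ = 2 * ∑ α, ((m α : ℚ) * (((aα α : ℚ) - bα α) / 2) - (m α : ℚ) * ((m α : ℚ) - 1) / 2) := by
          rw [h2']
      _ = ∑ α, 2 * ((m α : ℚ) * (((aα α : ℚ) - bα α) / 2) - (m α : ℚ) * ((m α : ℚ) - 1) / 2) :=
          Finset.mul_sum _ _ _
      _ = ∑ α, (m α : ℚ) * ((aα α : ℚ) - bα α - m α + 1) :=
          Finset.sum_congr rfl fun α _ => by ring
  have key : ∀ α : Fin r, (m α : ℚ) * (1 - bα α) ≤ (m α : ℚ) * ((aα α : ℚ) - bα α - m α + 1) := by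
    intro α
    have h1 : (m α : ℚ) ≤ aα α := by exact_mod_cast hm α
    have h2' : (0 : ℚ) ≤ m α := Nat.cast_nonneg _
    nlinarith
  have step : ∑ α, (m α : ℚ) * (1 - bα α) ≤ ∑ i ∈ S, ((a' i : ℚ) * (1 - b' i)) := by
    rw [E]; exact Finset.sum_le_sum fun α _ => key α
  have hA : ∑ i ∈ S, ((a' i : ℚ) * (1 - b' i))
      = ∑ i ∈ S, (a' i : ℚ) - ∑ i ∈ S, ((a' i : ℚ) * b' i) := by
    rw [← Finset.sum_sub_distrib]; exact Finset.sum_congr rfl fun i _ => by ring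
  have hB : ∑ α, (m α : ℚ) * (1 - bα α)
      = ∑ α, (m α : ℚ) - ∑ α, ((m α : ℚ) * bα α) := by
    rw [← Finset.sum_sub_distrib]; exact Finset.sum_congr rfl fun α _ => by ring
  have hcardQ : ∑ i ∈ S, (a' i : ℚ) = ∑ α, (m α : ℚ) := by exact_mod_cast hcard
  have hQ : ∑ i ∈ S, ((a' i : ℚ) * b' i) ≤ ∑ α, ((m α : ℚ) * bα α) := by
    rw [hA, hB] at step; linarith
  have hNat : ∑ i ∈ S, a' i * b' i ≤ ∑ α, m α * bα α := by
    have : ((∑ i ∈ S, a' i * b' i : ℕ) : ℚ) ≤ ((∑ α, m α * bα α : ℕ) : ℚ) := by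
      push_cast; exact hQ
    exact_mod_cast this
  -- the submultiset
  set ν : Multiset ℕ := ∑ α, Multiset.replicate (m α) (bα α) with hν
  have hνμ : ν ≤ μ :=
    Finset.sum_le_sum fun α _ => (Multiset.replicate_le_replicate _).mpr (hm α)
  have hνcard : Multiset.card ν = ∑ α, m α := by
    simp [hν, card_finsetSum]
  have hνsum : ν.sum = ∑ α, m α * bα α := by
    rw [hν, sum_finsetSum]
    simp [Multiset.sum_replicate]
  set L := (Multiset.sort μ (· ≤ ·)).reverse with hL
  have hLsorted : L.Pairwise (fun a b => b ≤ a) :=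
    List.pairwise_reverse.mpr (Multiset.pairwise_sort μ _)
  have hLμ : (L : Multiset ℕ) = μ := by
    rw [hL, Multiset.coe_reverse, Multiset.sort_eq]
  have hfinal := take_top_sum L hLsorted ν (hLμ ▸ hνμ)
  rw [hνcard, ← hcard] at hfinal
  calc ∑ i ∈ S, a' i * b' i ≤ ∑ α, m α * bα α := hNat
    _ = ν.sum := hνsum.symm
    _ ≤ (L.take (∑ i ∈ S, a' i)).sum := hfinal
end
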